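/- arXiv:1405.6759 — 6 statements merged into one kernel-verified Lean document; each statement's English description precedes it below -/
import Mathlib

section
/- Let h and g be complex functions analytic on the unit disk 𝔻 = {z ∈ ℂ : |z| < 1} with g(0) = 0, and define f(z) = h(z) + conj(g(z)). Assume f is locally univalent on 𝔻, i.e., every point of 𝔻 has a neighborhood contained in 𝔻 on which f is injective. Then f is injective on 𝔻 and f(𝔻) is convex in the horizontal direction if and only if h − g is injective on 𝔻 and (h − g)(𝔻) is convex in the horizontal direction. -/
open Set Metric Complex Filter

/-- A continuous, locally injective function on an order-connected subset of `ℝ`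
is injective. -/
lemma injOn_of_locallyInjOn_real {A : Set ℝ} (hA : A.OrdConnected) {t : ℝ → ℝ}
    (htc : ContinuousOn t A)
    (hloc : ∀ x ∈ A, ∃ ε > 0, InjOn t (A ∩ Metric.ball x ε)) :
    InjOn t A := by
  have key : ∀ a ∈ A, ∀ b ∈ A, a < b → t a ≠ t b := by
    intro a ha b hb hab
    have hIcc : Icc a b ⊆ A := hA.out ha hb
    have hdata : ∀ w : Icc a b, ∃ ε > 0, InjOn t (A ∩ Metric.ball (w : ℝ) ε) :=
      fun w => hloc w (hIcc w.2)
    choose ε hεpos hεinj using hdata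
    have hcover : Icc a b ⊆ ⋃ w : Icc a b, Metric.ball (w : ℝ) (ε w) := by
      intro x hx
      exact mem_iUnion.mpr ⟨⟨x, hx⟩, mem_ball_self (hεpos ⟨x, hx⟩)⟩
    obtain ⟨δ, hδ, hleb⟩ :=
      lebesgue_number_lemma_of_metric isCompact_Icc (fun w => isOpen_ball) hcover
    have hshort : ∀ c d : ℝ, a ≤ c → c ≤ d → d ≤ b → d - c < δ → InjOn t (Icc c d) := by
      intro c d hac hcd hdb hlen
      have hc : c ∈ Icc a b := ⟨hac, hcd.trans hdb⟩
      obtain ⟨w, hw⟩ := hleb c hc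
      have hsub : Icc c d ⊆ A ∩ Metric.ball (w : ℝ) (ε w) := by
        intro y hy
        refine ⟨hIcc ⟨hac.trans hy.1, hy.2.trans hdb⟩, hw ?_⟩
        rw [Metric.mem_ball, Real.dist_eq, _root_.abs_of_nonneg (sub_nonneg.mpr hy.1)]
        linarith [hy.2]
      exact (hεinj w).mono hsub
    set N : ℕ := ⌈(b - a) / (δ / 2)⌉₊ + 1 with hN
    have hN0 : 0 < N := Nat.succ_pos _
    have hNR : (0 : ℝ) < N := by exact_mod_cast hN0
    set st : ℝ := (b - a) / N with hst
    have hstep : st < δ / 2 := by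
      rw [hst, div_lt_iff₀ hNR]
      have h1 : (b - a) / (δ / 2) ≤ (⌈(b - a) / (δ / 2)⌉₊ : ℝ) := Nat.le_ceil _
      have h2 : ((⌈(b - a) / (δ / 2)⌉₊ : ℝ)) < N := by
        rw [hN]; push_cast; linarith
      have hba : b - a ≤ (⌈(b - a) / (δ / 2)⌉₊ : ℝ) * (δ / 2) := by
        rw [div_le_iff₀ (by linarith : (0:ℝ) < δ / 2)] at h1
        linarith
      nlinarith
    have hstep0 : 0 < st := div_pos (by linarith) hNR
    have hNst : (N : ℝ) * st = b - a := by
      rw [hst]; field_simp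
    set x : ℕ → ℝ := fun i => a + (min i N : ℕ) * st with hx
    have hxval : ∀ i : ℕ, x i = a + (min i N : ℕ) * st := fun i => rfl
    have hxmono : ∀ i j : ℕ, i ≤ j → x i ≤ x j := by
      intro i j hij
      rw [hxval, hxval]
      have : ((min i N : ℕ) : ℝ) ≤ ((min j N : ℕ) : ℝ) := by
        have : min i N ≤ min j N := by omega
        exact_mod_cast this
      nlinarith
    have hxmem : ∀ i, x i ∈ Icc a b := by
      intro i
      rw [hxval]
      constructor
      · have h0 : (0:ℝ) ≤ ((min i N : ℕ) : ℝ) := Nat.cast_nonneg _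
        nlinarith
      · have : ((min i N : ℕ) : ℝ) ≤ (N : ℝ) := by exact_mod_cast Nat.min_le_right i N
        nlinarith
    have hxlt : ∀ i j : ℕ, i < j → j ≤ N → x i < x j := by
      intro i j hij hjN
      rw [hxval, hxval]
      have h1 : min i N = i := Nat.min_eq_left ((Nat.le_of_lt hij).trans hjN)
      have h2 : min j N = j := Nat.min_eq_left hjN
      rw [h1, h2]
      have : (i : ℝ) < (j : ℝ) := by exact_mod_cast hij
      nlinarith
    have hx0 : x 0 = a := by rw [hxval]; simp
    have hxN : x N = b := by rw [hxval]; simp; linarith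
    have hgap2 : ∀ i : ℕ, x (i + 2) - x i < δ := by
      intro i
      have hmono : ((min (i+2) N : ℕ) : ℝ) ≤ ((min i N : ℕ) : ℝ) + 2 := by
        have : min (i+2) N ≤ min i N + 2 := by omega
        exact_mod_cast this
      rw [hxval, hxval]
      nlinarith
    have hgap1 : ∀ i : ℕ, x (i + 1) - x i < δ := by
      intro i
      have := hgap2 i
      have := hxmono (i+1) (i+2) (by omega)
      linarith
    set u : ℕ → ℝ := fun i => t (x i) with hu
    have hne : ∀ i : ℕ, i < N → u i ≠ u (i + 1) := by
      intro i hiN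
      have hlt : x i < x (i + 1) := hxlt i (i+1) (Nat.lt_succ_self i) hiN
      have hinj := hshort (x i) (x (i+1)) (hxmem i).1 hlt.le (hxmem (i+1)).2 (hgap1 i)
      intro he
      exact hlt.ne (hinj (left_mem_Icc.mpr hlt.le) (right_mem_Icc.mpr hlt.le) he)
    have hsign : ∀ i : ℕ, i + 2 ≤ N → (u i < u (i+1) ↔ u (i+1) < u (i+2)) := by
      intro i hi2
      have h01 : x i < x (i+1) := hxlt i (i+1) (by omega) (by omega)
      have h12 : x (i+1) < x (i+2) := hxlt (i+1) (i+2) (by omega) hi2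
      have hinj := hshort (x i) (x (i+2)) (hxmem i).1 (by linarith) (hxmem (i+2)).2 (hgap2 i)
      have hcont : ContinuousOn t (Icc (x i) (x (i+2))) :=
        htc.mono fun y hy => hIcc ⟨(hxmem i).1.trans hy.1, hy.2.trans (hxmem (i+2)).2⟩
      have m0 : x i ∈ Icc (x i) (x (i+2)) := left_mem_Icc.mpr (by linarith)
      have m1 : x (i+1) ∈ Icc (x i) (x (i+2)) := ⟨h01.le, h12.le⟩
      have m2 : x (i+2) ∈ Icc (x i) (x (i+2)) := right_mem_Icc.mpr (by linarith)
      rcases ContinuousOn.strictMonoOn_of_injOn_Icc' (by linarith) hcont hinj with hm | hm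
      · constructor
        · intro _; exact hm m1 m2 h12
        · intro _; exact hm m0 m1 h01
      · constructor
        · intro hlt
          exact absurd (hm m0 m1 h01) (not_lt.mpr hlt.le)
        · intro hlt
          exact absurd (hm m1 m2 h12) (not_lt.mpr hlt.le)
    have hdir : ∀ i : ℕ, i < N → (u i < u (i+1) ↔ u 0 < u 1) := by
      intro i
      induction i with
      | zero => intro _; rfl
      | succ k ih =>
        intro hk
        have hkN : k < N := by omega
        have := hsign k (by omega)
        rw [← this]
        exact ih hkN
    intro hte
    have hte' : u 0 = u N := by
      simp only [hu]
      rw [hx0, hxN]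
      exact hte
    have hsum : ∑ i ∈ Finset.range N, (u (i+1) - u i) = u N - u 0 :=
      Finset.sum_range_sub u N
    rcases lt_or_gt_of_ne (hne 0 hN0) with hc | hc
    · have hpos : ∀ i ∈ Finset.range N, 0 < u (i+1) - u i := by
        intro i hi
        have := (hdir i (Finset.mem_range.mp hi)).mpr hc
        linarith
      have : 0 < u N - u 0 := hsum ▸ Finset.sum_pos hpos ⟨0, Finset.mem_range.mpr hN0⟩
      linarith [hte'.le, hte'.ge]
    · have hneg : ∀ i ∈ Finset.range N, u (i+1) - u i < 0 := by
        intro i hi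
        have hiff := hdir i (Finset.mem_range.mp hi)
        have : ¬ (u i < u (i+1)) := by
          rw [hiff]; exact not_lt.mpr hc.le
        have hne' := hne i (Finset.mem_range.mp hi)
        rcases lt_or_gt_of_ne hne' with h | h
        · exact absurd h this
        · linarith
      have : u N - u 0 < 0 := hsum ▸ Finset.sum_neg hneg ⟨0, Finset.mem_range.mpr hN0⟩
      linarith [hte'.le, hte'.ge]
  intro a ha b hb hte
  by_contra hne
  rcases lt_or_gt_of_ne hne with hlt | hlt
  · exact key a ha b hb hlt hte
  · exact key b hb a ha hlt hte.symm

/-- A continuous injective real function on `[a,b]` covers a neighborhood of the value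
at an interior point. -/
lemma image_nbhd_of_injOn {q : ℝ → ℝ} {a b x₀ : ℝ} (ha : a < x₀) (hb : x₀ < b)
    (hqc : ContinuousOn q (Icc a b)) (hqi : InjOn q (Icc a b)) :
    ∃ u v, u < q x₀ ∧ q x₀ < v ∧ Ioo u v ⊆ q '' (Icc a b) := by
  have hab : a ≤ b := by linarith
  have ma : a ∈ Icc a b := left_mem_Icc.mpr hab
  have mx : x₀ ∈ Icc a b := ⟨ha.le, hb.le⟩
  have mb : b ∈ Icc a b := right_mem_Icc.mpr hab
  rcases ContinuousOn.strictMonoOn_of_injOn_Icc' hab hqc hqi with hm | hm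
  · refine ⟨q a, q b, hm ma mx ha, hm mx mb hb, ?_⟩
    intro y hy
    exact intermediate_value_Icc hab hqc ⟨hy.1.le, hy.2.le⟩
  · refine ⟨q b, q a, hm mx mb hb, hm ma mx ha, ?_⟩
    intro y hy
    exact intermediate_value_Icc' hab hqc ⟨hy.1.le, hy.2.le⟩

/-- There is no "injective triod": three arcs emanating from a common point `z₀`,
pairwise meeting only at `z₀`, on whose union a real-valued map `ρ` is injective
(in the weak sense expressed by `hcross`) and continuous. -/
lemma no_triod (ε : ℝ) (hε : 0 < ε) (z₀ : ℂ) (p : Fin 3 → ℝ → ℂ) (ρ : ℂ → ℝ)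
    (hp0 : ∀ j, p j 0 = z₀)
    (hpc : ∀ j, ContinuousOn (fun s => ρ (p j s)) (Icc 0 ε))
    (hsep : ∀ i j, i ≠ j → ∀ s ∈ Icc (0:ℝ) ε, ∀ s' ∈ Icc (0:ℝ) ε,
      p i s = p j s' → s = 0)
    (hcross : ∀ i j, ∀ s ∈ Icc (0:ℝ) ε, ∀ s' ∈ Icc (0:ℝ) ε,
      ρ (p i s) = ρ (p j s') → p i s = p j s')
    (hne : ∀ j, p j ε ≠ z₀) : False := by
  set q : Fin 3 → ℝ → ℝ := fun j s => ρ (p j s) with hq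
  set t₀ : ℝ := ρ z₀ with ht₀
  have hq0 : ∀ j, q j 0 = t₀ := by
    intro j
    simp only [hq, ht₀]
    rw [hp0 j]
  have hmε : ε ∈ Icc (0:ℝ) ε := right_mem_Icc.mpr hε.le
  have hm0 : (0:ℝ) ∈ Icc (0:ℝ) ε := left_mem_Icc.mpr hε.le
  have hqε : ∀ j, q j ε ≠ t₀ := by
    intro j he
    have h1 : q j ε = q j 0 := by rw [he, hq0 j]
    have : p j ε = p j 0 := hcross j j ε hmε 0 hm0 h1
    exact hne j (this.trans (hp0 j))
  have hpair : ∃ i j : Fin 3, i ≠ j ∧ ((t₀ < q i ε) ↔ (t₀ < q j ε)) := by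
    rcases Classical.em (t₀ < q 0 ε) with h0 | h0 <;>
      rcases Classical.em (t₀ < q 1 ε) with h1 | h1 <;>
        rcases Classical.em (t₀ < q 2 ε) with h2 | h2
    all_goals first
      | exact ⟨0, 1, by decide, iff_of_true h0 h1⟩
      | exact ⟨0, 1, by decide, iff_of_false h0 h1⟩
      | exact ⟨0, 2, by decide, iff_of_true h0 h2⟩
      | exact ⟨0, 2, by decide, iff_of_false h0 h2⟩
      | exact ⟨1, 2, by decide, iff_of_true h1 h2⟩
      | exact ⟨1, 2, by decide, iff_of_false h1 h2⟩
  obtain ⟨i, j, hij, hiff⟩ := hpair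
  by_cases hside : t₀ < q i ε
  · have hsj : t₀ < q j ε := hiff.mp hside
    set τ : ℝ := min (q i ε) (q j ε) with hτ
    have hτi : τ ≤ q i ε := min_le_left _ _
    have hτj : τ ≤ q j ε := min_le_right _ _
    have ht₀τ : t₀ < τ := lt_min hside hsj
    obtain ⟨si, hsi, hqsi⟩ : ∃ s ∈ Icc (0:ℝ) ε, q i s = τ := by
      have h := intermediate_value_Icc hε.le (hpc i)
      have hmem : τ ∈ Icc (q i 0) (q i ε) := by rw [hq0]; exact ⟨ht₀τ.le, hτi⟩
      obtain ⟨s, hs, hqs⟩ := h hmem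
      exact ⟨s, hs, hqs⟩
    obtain ⟨sj, hsj', hqsj⟩ : ∃ s ∈ Icc (0:ℝ) ε, q j s = τ := by
      have h := intermediate_value_Icc hε.le (hpc j)
      have hmem : τ ∈ Icc (q j 0) (q j ε) := by rw [hq0]; exact ⟨ht₀τ.le, hτj⟩
      obtain ⟨s, hs, hqs⟩ := h hmem
      exact ⟨s, hs, hqs⟩
    have heq : q i si = q j sj := by rw [hqsi, hqsj]
    have : p i si = p j sj := hcross i j si hsi sj hsj' heq
    have hsi0 : si = 0 := hsep i j hij si hsi sj hsj' this
    rw [hsi0, hq0 i] at hqsi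
    exact absurd hqsi.symm (ne_of_gt ht₀τ)
  · have hsj : ¬ t₀ < q j ε := fun hc => hside (hiff.mpr hc)
    have hqi' : q i ε < t₀ := lt_of_le_of_ne (not_lt.mp hside) (hqε i)
    have hqj' : q j ε < t₀ := lt_of_le_of_ne (not_lt.mp hsj) (hqε j)
    set τ : ℝ := max (q i ε) (q j ε) with hτ
    have hτi : q i ε ≤ τ := le_max_left _ _
    have hτj : q j ε ≤ τ := le_max_right _ _
    have ht₀τ : τ < t₀ := max_lt hqi' hqj'
    obtain ⟨si, hsi, hqsi⟩ : ∃ s ∈ Icc (0:ℝ) ε, q i s = τ := by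
      have h := intermediate_value_Icc' hε.le (hpc i)
      have hmem : τ ∈ Icc (q i ε) (q i 0) := by rw [hq0]; exact ⟨hτi, ht₀τ.le⟩
      obtain ⟨s, hs, hqs⟩ := h hmem
      exact ⟨s, hs, hqs⟩
    obtain ⟨sj, hsj'', hqsj⟩ : ∃ s ∈ Icc (0:ℝ) ε, q j s = τ := by
      have h := intermediate_value_Icc' hε.le (hpc j)
      have hmem : τ ∈ Icc (q j ε) (q j 0) := by rw [hq0]; exact ⟨hτj, ht₀τ.le⟩
      obtain ⟨s, hs, hqs⟩ := h hmem
      exact ⟨s, hs, hqs⟩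
    have heq : q i si = q j sj := by rw [hqsi, hqsj]
    have : p i si = p j sj := hcross i j si hsi sj hsj'' heq
    have hsi0 : si = 0 := hsep i j hij si hsi sj hsj'' this
    rw [hsi0, hq0 i] at hqsi
    exact absurd hqsi (ne_of_gt ht₀τ)

/-- There is no continuous real-valued injection on the unit disk. -/
lemma no_injOn_re_ball (u : ℂ → ℝ) (huc : ContinuousOn u (Metric.ball (0:ℂ) 1))
    (hui : InjOn u (Metric.ball (0:ℂ) 1)) : False := by
  have h01 : (1:ℂ) ≠ Complex.I := by
    intro hc; have := congrArg Complex.re hc; simp at this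
  have h0m : (1:ℂ) ≠ -1 := by norm_num
  have h1m : Complex.I ≠ -1 := by
    intro hc; have := congrArg Complex.im hc; simp at this
  set ζ : Fin 3 → ℂ := ![1, Complex.I, -1] with hζ
  have hζabs : ∀ j, ‖ζ j‖ = 1 := by
    intro j
    fin_cases j <;> simp [hζ]
  have hζne : ∀ i j : Fin 3, i ≠ j → ζ i ≠ ζ j := by
    intro i j hij
    fin_cases i <;> fin_cases j <;> simp_all [hζ] <;> tauto
  have hζ0 : ∀ j, ζ j ≠ 0 := by
    intro j hc
    have := hζabs j
    rw [hc] at this; simp at this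
  set p : Fin 3 → ℝ → ℂ := fun j s => (s : ℂ) * ζ j with hp
  have hmem : ∀ j, ∀ s ∈ Icc (0:ℝ) (1/2), p j s ∈ Metric.ball (0:ℂ) 1 := by
    intro j s hs
    rw [Metric.mem_ball, dist_eq_norm]
    rw [sub_zero, norm_mul, hζabs j, mul_one, Complex.norm_real, Real.norm_eq_abs,
      _root_.abs_of_nonneg hs.1]
    linarith [hs.2]
  apply no_triod (1/2) (by norm_num) 0 p u
  · intro j
    show ((0:ℝ):ℂ) * ζ j = 0
    simp
  · intro j
    refine huc.comp ?_ ?_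
    · exact (Complex.continuous_ofReal.mul continuous_const).continuousOn
    · intro s hs; exact hmem j s hs
  · intro i j hij s hs s' hs' heq
    have heq' : (s:ℂ) * ζ i = (s':ℂ) * ζ j := heq
    have habs : ‖(s:ℂ) * ζ i‖ = ‖(s':ℂ) * ζ j‖ := by rw [heq']
    rw [norm_mul, norm_mul, hζabs i, hζabs j, mul_one, mul_one, Complex.norm_real, Real.norm_eq_abs,
      Complex.norm_real, Real.norm_eq_abs, _root_.abs_of_nonneg hs.1, _root_.abs_of_nonneg hs'.1] at habs
    by_contra hs0
    have : ζ i = ζ j := by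
      rw [← habs] at heq'
      exact mul_left_cancel₀ (by exact_mod_cast hs0) heq'
    exact hζne i j hij this
  · intro i j s hs s' hs' heq
    exact hui (hmem i s hs) (hmem j s' hs') heq
  · intro j hc
    have hc' : ((1/2:ℝ):ℂ) * ζ j = 0 := hc
    have : ((1/2:ℝ):ℂ) ≠ 0 := by norm_num
    exact (mul_ne_zero this (hζ0 j)) hc'

/-- Core transfer lemma: if `P` is injective on the disk with CHD image, `Q` is continuous
and locally injective with the same imaginary part as `P`, and `P` admits continuous local
sections over horizontal slices, then `Q` is injective with CHD image. -/
lemma core_transfer (P Q : ℂ → ℂ)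
    (hPinj : InjOn P (Metric.ball (0:ℂ) 1))
    (hPchd : ∀ c : ℝ, Set.OrdConnected {x : ℝ | (x : ℂ) + c * Complex.I ∈ P '' Metric.ball (0:ℂ) 1})
    (hQc : ContinuousOn Q (Metric.ball (0:ℂ) 1))
    (hIm : ∀ z ∈ Metric.ball (0:ℂ) 1, (P z).im = (Q z).im)
    (hQloc : ∀ z ∈ Metric.ball (0:ℂ) 1, ∃ U ∈ nhds z, U ⊆ Metric.ball (0:ℂ) 1 ∧ InjOn Q U)
    (hZ : ∀ c : ℝ, ∃ Z : ℝ → ℂ,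
      ContinuousOn Z {x : ℝ | (x:ℂ) + c * Complex.I ∈ P '' Metric.ball (0:ℂ) 1} ∧
      ∀ x ∈ {x : ℝ | (x:ℂ) + c * Complex.I ∈ P '' Metric.ball (0:ℂ) 1},
        Z x ∈ Metric.ball (0:ℂ) 1 ∧ P (Z x) = (x:ℂ) + c * Complex.I) :
    InjOn Q (Metric.ball (0:ℂ) 1) ∧
      (∀ c : ℝ, Set.OrdConnected {x : ℝ | (x : ℂ) + c * Complex.I ∈ Q '' Metric.ball (0:ℂ) 1}) := by
  set D := Metric.ball (0:ℂ) 1 with hD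
  have him' : ∀ (x c : ℝ), ((x:ℂ) + c * Complex.I).im = c := by
    intro x c; simp
  have hre' : ∀ (x c : ℝ), ((x:ℂ) + c * Complex.I).re = x := by
    intro x c; simp
  have main : ∀ c : ℝ,
      (∀ z₁ ∈ D, ∀ z₂ ∈ D, (P z₁).im = c → (P z₂).im = c → Q z₁ = Q z₂ → z₁ = z₂) ∧
      Set.OrdConnected {x : ℝ | (x : ℂ) + c * Complex.I ∈ Q '' D} := by
    intro c
    obtain ⟨Z, hZc, hZm⟩ := hZ c
    set A : Set ℝ := {x : ℝ | (x:ℂ) + c * Complex.I ∈ P '' D} with hA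
    -- the inverse property
    have hZinv : ∀ z ∈ D, (P z).im = c → Z ((P z).re) = z := by
      intro z hz hzc
      have hxA : (P z).re ∈ A := by
        show ((P z).re : ℂ) + c * Complex.I ∈ P '' D
        rw [← hzc, Complex.re_add_im]
        exact ⟨z, hz, rfl⟩
      obtain ⟨hmem, heq⟩ := hZm _ hxA
      apply hPinj hmem hz
      rw [heq, ← hzc, Complex.re_add_im]
    -- imaginary parts along the section
    have hQim : ∀ x ∈ A, (Q (Z x)).im = c := by
      intro x hx
      obtain ⟨hmem, heq⟩ := hZm x hx
      rw [← hIm _ hmem, heq, him']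
    set t : ℝ → ℝ := fun x => (Q (Z x)).re with ht
    have hZD : MapsTo Z A D := fun x hx => (hZm x hx).1
    have htc : ContinuousOn t A := by
      apply Complex.continuous_re.comp_continuousOn
      exact hQc.comp hZc hZD
    have htinj : InjOn t A := by
      apply injOn_of_locallyInjOn_real (hPchd c) htc
      intro x₀ hx₀
      obtain ⟨U, hU, hUD, hQU⟩ := hQloc (Z x₀) (hZD hx₀)
      have hpre : Z ⁻¹' U ∈ nhdsWithin x₀ A := hZc x₀ hx₀ hU
      rw [Metric.mem_nhdsWithin_iff] at hpre
      obtain ⟨ε, hε, hball⟩ := hpre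
      refine ⟨ε, hε, ?_⟩
      intro x₁ hx₁ x₂ hx₂ he
      have hZ1 : Z x₁ ∈ U := hball ⟨hx₁.2, hx₁.1⟩
      have hZ2 : Z x₂ ∈ U := hball ⟨hx₂.2, hx₂.1⟩
      have hQeq : Q (Z x₁) = Q (Z x₂) := by
        apply Complex.ext
        · exact he
        · rw [hQim _ hx₁.1, hQim _ hx₂.1]
      have hZeq : Z x₁ = Z x₂ := hQU hZ1 hZ2 hQeq
      have h1 := (hZm _ hx₁.1).2
      have h2 := (hZm _ hx₂.1).2
      rw [hZeq] at h1
      rw [h1] at h2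
      have : (x₁:ℂ) = (x₂:ℂ) := by
        field_simp at h2
        exact add_right_cancel h2
      exact_mod_cast this
    constructor
    · intro z₁ hz₁ z₂ hz₂ hc₁ hc₂ hQeq
      have hx₁ : (P z₁).re ∈ A := by
        show ((P z₁).re : ℂ) + c * Complex.I ∈ P '' D
        rw [← hc₁, Complex.re_add_im]; exact ⟨z₁, hz₁, rfl⟩
      have hx₂ : (P z₂).re ∈ A := by
        show ((P z₂).re : ℂ) + c * Complex.I ∈ P '' D
        rw [← hc₂, Complex.re_add_im]; exact ⟨z₂, hz₂, rfl⟩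
      have ht₁ : t ((P z₁).re) = (Q z₁).re := by
        simp only [ht]; rw [hZinv z₁ hz₁ hc₁]
      have ht₂ : t ((P z₂).re) = (Q z₂).re := by
        simp only [ht]; rw [hZinv z₂ hz₂ hc₂]
      have : (P z₁).re = (P z₂).re := by
        apply htinj hx₁ hx₂
        rw [ht₁, ht₂, hQeq]
      have hPeq : P z₁ = P z₂ := by
        have e1 : P z₁ = ((P z₁).re : ℂ) + c * Complex.I := by
          rw [← hc₁, Complex.re_add_im]
        have e2 : P z₂ = ((P z₂).re : ℂ) + c * Complex.I := by
          rw [← hc₂, Complex.re_add_im]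
        rw [e1, e2, this]
      exact hPinj hz₁ hz₂ hPeq
    · -- CHD slice of Q '' D equals t '' A
      have himage : {x : ℝ | (x : ℂ) + c * Complex.I ∈ Q '' D} = t '' A := by
        ext x
        constructor
        · rintro ⟨z, hz, hQz⟩
          have hzim : (P z).im = c := by
            rw [hIm z hz]
            rw [← him' x c, hQz]
          have hxA : (P z).re ∈ A := by
            show ((P z).re : ℂ) + c * Complex.I ∈ P '' D
            rw [← hzim, Complex.re_add_im]; exact ⟨z, hz, rfl⟩
          refine ⟨(P z).re, hxA, ?_⟩
          simp only [ht]
          rw [hZinv z hz hzim, hQz, hre']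
        · rintro ⟨x', hx', rfl⟩
          refine ⟨Z x', hZD hx', ?_⟩
          have : Q (Z x') = ((Q (Z x')).re : ℂ) + c * Complex.I := by
            rw [← hQim x' hx', Complex.re_add_im]
          rw [← this]
      rw [himage]
      have hpre : IsPreconnected (t '' A) :=
        ((hPchd c).isPreconnected).image t htc
      exact hpre.ordConnected
  constructor
  · intro z₁ hz₁ z₂ hz₂ hQeq
    set c := (P z₁).im with hc
    have hc₂ : (P z₂).im = c := by
      rw [hIm z₂ hz₂, ← hQeq, ← hIm z₁ hz₁]
    exact (main c).1 z₁ hz₁ z₂ hz₂ rfl hc₂ hQeq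
  · intro c
    exact (main c).2

/-- An injective analytic map admits continuous local sections over horizontal slices. -/
lemma exists_section_of_analytic (P : ℂ → ℂ)
    (hPa : AnalyticOnNhd ℂ P (Metric.ball (0:ℂ) 1))
    (hPinj : InjOn P (Metric.ball (0:ℂ) 1)) (c : ℝ) :
    ∃ Z : ℝ → ℂ,
      ContinuousOn Z {x : ℝ | (x:ℂ) + c * Complex.I ∈ P '' Metric.ball (0:ℂ) 1} ∧
      ∀ x ∈ {x : ℝ | (x:ℂ) + c * Complex.I ∈ P '' Metric.ball (0:ℂ) 1},
        Z x ∈ Metric.ball (0:ℂ) 1 ∧ P (Z x) = (x:ℂ) + c * Complex.I := by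
  set D := Metric.ball (0:ℂ) 1 with hD
  have hDopen : IsOpen D := Metric.isOpen_ball
  have hDconn : IsPreconnected D := (convex_ball (0:ℂ) 1).isPreconnected
  -- P is an open map on subsets of D
  have hopen : ∀ s ⊆ D, IsOpen s → IsOpen (P '' s) := by
    rcases hPa.is_constant_or_isOpen hDconn with ⟨w, hw⟩ | h
    · exfalso
      have h0 : (0:ℂ) ∈ D := by simp [hD]
      have h1 : (1/2:ℂ) ∈ D := by
        simp only [hD, Metric.mem_ball, dist_zero_right]
        norm_num
      have := hPinj h0 h1 ((hw 0 h0).trans (hw _ h1).symm)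
      norm_num at this
    · exact h
  set A : Set ℝ := {x : ℝ | (x:ℂ) + c * Complex.I ∈ P '' D} with hA
  set Z : ℝ → ℂ := fun x => @dite _ (∃ z, z ∈ D ∧ P z = (x:ℂ) + c * Complex.I)
    (Classical.dec _) (fun hx => hx.choose) (fun _ => 0) with hZdef
  have hZspec : ∀ x ∈ A, Z x ∈ D ∧ P (Z x) = (x:ℂ) + c * Complex.I := by
    intro x hx
    obtain ⟨z, hz, hPz⟩ := hx
    have hex : ∃ z, z ∈ D ∧ P z = (x:ℂ) + c * Complex.I := ⟨z, hz, hPz⟩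
    simp only [hZdef, dif_pos hex]
    exact hex.choose_spec
  refine ⟨Z, ?_, hZspec⟩
  intro x₀ hx₀
  obtain ⟨hZD, hZP⟩ := hZspec x₀ hx₀
  set z₀ := Z x₀ with hz₀
  rw [ContinuousWithinAt]
  rw [Filter.tendsto_def]
  intro W hW
  obtain ⟨r, hr, hball⟩ := Metric.mem_nhds_iff.mp (Filter.inter_mem hW (hDopen.mem_nhds hZD))
  have hV : IsOpen (P '' Metric.ball z₀ r) :=
    hopen _ (fun y hy => (hball hy).2) Metric.isOpen_ball
  set O : Set ℝ := (fun x : ℝ => (x:ℂ) + c * Complex.I) ⁻¹' (P '' Metric.ball z₀ r) with hO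
  have hOopen : IsOpen O :=
    hV.preimage (Complex.continuous_ofReal.add continuous_const)
  have hx₀O : x₀ ∈ O := by
    show (x₀:ℂ) + c * Complex.I ∈ P '' Metric.ball z₀ r
    exact ⟨z₀, Metric.mem_ball_self hr, hZP⟩
  apply mem_nhdsWithin.mpr
  refine ⟨O, hOopen, hx₀O, ?_⟩
  rintro x ⟨hxO, hxA⟩
  obtain ⟨z', hz', hPz'⟩ := hxO
  have hz'D : z' ∈ D := (hball hz').2
  obtain ⟨hZxD, hZxP⟩ := hZspec x hxA
  have : Z x = z' := hPinj hZxD hz'D (by rw [hZxP, hPz'])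
  show Z x ∈ W
  rw [this]
  exact (hball hz').1

/-- If `f` is injective on the disk with the same imaginary part as the analytic
nonconstant `F`, then `F` has nonvanishing derivative. -/
lemma deriv_ne_zero_of_injOn (F f : ℂ → ℂ)
    (hFa : AnalyticOnNhd ℂ F (Metric.ball (0:ℂ) 1))
    (hfc : ContinuousOn f (Metric.ball (0:ℂ) 1))
    (hfi : InjOn f (Metric.ball (0:ℂ) 1))
    (hIm : ∀ z ∈ Metric.ball (0:ℂ) 1, (f z).im = (F z).im)
    (hnc : ∀ w : ℂ, ¬ ∀ z ∈ Metric.ball (0:ℂ) 1, F z = w)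
    {z₀ : ℂ} (hz₀ : z₀ ∈ Metric.ball (0:ℂ) 1) : deriv F z₀ ≠ 0 := by
  intro h0
  set D := Metric.ball (0:ℂ) 1 with hD
  have hDopen : IsOpen D := Metric.isOpen_ball
  have hDconn : IsPreconnected D := (convex_ball (0:ℂ) 1).isPreconnected
  -- local factorization  F z - F z₀ = (z - z₀)^n * g₁ z
  have hGa : AnalyticAt ℂ (fun z => F z - F z₀) z₀ := (hFa z₀ hz₀).sub analyticAt_const
  have hev : ¬ ∀ᶠ z in nhds z₀, F z - F z₀ = 0 := by
    intro hev
    have heq : ∀ᶠ z in nhds z₀, F z = F z₀ := hev.mono (fun z hz => sub_eq_zero.mp hz)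
    have := hFa.eqOn_of_preconnected_of_eventuallyEq analyticOnNhd_const hDconn hz₀ heq
    exact hnc (F z₀) (fun z hz => this hz)
  obtain ⟨n, g₁, hg₁a, hg₁0, hg₁eq⟩ := hGa.exists_eventuallyEq_pow_smul_nonzero_iff.mpr hev
  have hg₁eq' : ∀ᶠ z in nhds z₀, F z - F z₀ = (z - z₀) ^ n * g₁ z := by
    filter_upwards [hg₁eq] with z hz
    rw [hz, smul_eq_mul]
  -- n ≥ 2
  have hn0 : n ≠ 0 := by
    intro hn
    have h00 := hg₁eq'.self_of_nhds
    rw [hn, sub_self, pow_zero, one_mul] at h00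
    exact hg₁0 h00.symm
  have hn1 : n ≠ 1 := by
    intro hn
    have hda : HasDerivAt (fun z => (z - z₀) ^ n * g₁ z) (g₁ z₀) z₀ := by
      rw [hn]
      have h1 : HasDerivAt (fun z : ℂ => z - z₀) 1 z₀ := (hasDerivAt_id z₀).sub_const z₀
      have h2 : HasDerivAt g₁ (deriv g₁ z₀) z₀ := hg₁a.differentiableAt.hasDerivAt
      have := h1.mul h2
      simp only [pow_one]
      exact this.congr_deriv (by simp)
    have hd1 : deriv (fun z => F z - F z₀) z₀ = g₁ z₀ := by
      rw [Filter.EventuallyEq.deriv_eq hg₁eq']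
      exact hda.deriv
    rw [deriv_sub_const, h0] at hd1
    exact hg₁0 hd1.symm
  have hn2 : 2 ≤ n := by omega
  have hnR : (0:ℝ) < n := by positivity
  have hnC : (n:ℂ) ≠ 0 := by exact_mod_cast hn0
  -- the n-th root ψ of g₁ near z₀
  set L : ℂ → ℂ := fun z => Complex.log (g₁ z₀) + Complex.log (g₁ z / g₁ z₀) with hL
  set ψ : ℂ → ℂ := fun z => Complex.exp ((n:ℂ)⁻¹ * L z) with hψ
  have hψa : AnalyticAt ℂ ψ z₀ := by
    have hdiv : AnalyticAt ℂ (fun z => g₁ z / g₁ z₀) z₀ := hg₁a.div analyticAt_const hg₁0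
    have hclog : AnalyticAt ℂ Complex.log ((fun z => g₁ z / g₁ z₀) z₀) := by
      apply analyticAt_clog
      show g₁ z₀ / g₁ z₀ ∈ Complex.slitPlane
      rw [div_self hg₁0]
      exact Complex.one_mem_slitPlane
    have hcomp : AnalyticAt ℂ (fun z => Complex.log (g₁ z / g₁ z₀)) z₀ :=
      AnalyticAt.comp (𝕜 := ℂ) (g := Complex.log) (f := fun z => g₁ z / g₁ z₀)
        (x := z₀) hclog hdiv
    exact analyticAt_cexp.comp (analyticAt_const.mul (analyticAt_const.add hcomp))
  have hψ0 : ψ z₀ ≠ 0 := Complex.exp_ne_zero _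
  have hψn : ∀ᶠ z in nhds z₀, ψ z ^ n = g₁ z := by
    have hne : ∀ᶠ z in nhds z₀, g₁ z ≠ 0 :=
      hg₁a.continuousAt.eventually_ne hg₁0
    filter_upwards [hne] with z hz
    have h1 : ψ z ^ n = Complex.exp ((n:ℂ) * ((n:ℂ)⁻¹ * L z)) := by
      rw [Complex.exp_nat_mul]
    rw [h1, ← mul_assoc, mul_inv_cancel₀ hnC, one_mul, hL]
    rw [Complex.exp_add, Complex.exp_log hg₁0, Complex.exp_log (div_ne_zero hz hg₁0)]
    field_simp
  set φ : ℂ → ℂ := fun z => (z - z₀) * ψ z with hφ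
  have hφ0 : φ z₀ = 0 := by simp [hφ]
  have hφstrict : HasStrictDerivAt φ (ψ z₀) z₀ := by
    have h1 : HasStrictDerivAt (fun z : ℂ => z - z₀) 1 z₀ :=
      (hasStrictDerivAt_id z₀).sub_const z₀
    have h2 : HasStrictDerivAt ψ (deriv ψ z₀) z₀ :=
      (hψa.contDiffAt : ContDiffAt ℂ 1 ψ z₀).hasStrictDerivAt one_ne_zero
    have := h1.mul h2
    exact this.congr_deriv (by simp)
  have hFev : ∀ᶠ z in nhds z₀, F z = F z₀ + φ z ^ n := by
    filter_upwards [hg₁eq', hψn] with z h1 h2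
    rw [hφ]
    simp only [mul_pow]
    rw [h2, ← h1]
    ring
  -- local inverse of φ
  set e := (hφstrict.hasStrictFDerivAt_equiv hψ0).toOpenPartialHomeomorph φ with he
  have hecoe : ⇑e = φ := HasStrictFDerivAt.toOpenPartialHomeomorph_coe _
  have hz₀src : z₀ ∈ e.source := HasStrictFDerivAt.mem_toOpenPartialHomeomorph_source _
  have he0 : e z₀ = 0 := by rw [hecoe, hφ0]
  -- small ball where everything holds
  obtain ⟨r₀, hr₀, hball₀⟩ : ∃ r₀ > 0, Metric.ball z₀ r₀ ⊆
      D ∩ e.source ∩ {z | F z = F z₀ + φ z ^ n} := by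
    apply Metric.mem_nhds_iff.mp
    exact Filter.inter_mem (Filter.inter_mem (hDopen.mem_nhds hz₀)
      (e.open_source.mem_nhds hz₀src)) hFev
  -- e.symm is continuous at 0 with value z₀
  have hsymm0 : e.symm 0 = z₀ := by
    rw [← he0]
    exact e.left_inv hz₀src
  have h0tgt : (0:ℂ) ∈ e.target := by
    rw [← he0]
    exact e.map_source hz₀src
  have hsymmc : Filter.Tendsto e.symm (nhds 0) (nhds z₀) := by
    have h := (e.continuousOn_symm 0 h0tgt).continuousAt (e.open_target.mem_nhds h0tgt)
    rwa [ContinuousAt, hsymm0] at h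
  obtain ⟨δ, hδ, hballδ⟩ : ∃ δ > 0, Metric.ball (0:ℂ) δ ⊆
      e.target ∩ e.symm ⁻¹' (Metric.ball z₀ r₀) := by
    apply Metric.mem_nhds_iff.mp
    refine Filter.inter_mem (e.open_target.mem_nhds h0tgt) ?_
    exact hsymmc (Metric.ball_mem_nhds z₀ hr₀)
  set ε : ℝ := δ / 2 with hε
  have hεpos : 0 < ε := by positivity
  -- the three directions
  set tj : Fin 3 → ℝ := fun j => Real.pi * j / n with htj
  set ζ : Fin 3 → ℂ := fun j => Complex.exp ((tj j : ℝ) * Complex.I) with hζ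
  have hζabs : ∀ j, ‖ζ j‖ = 1 := by
    intro j
    rw [hζ]
    simp [Complex.norm_exp]
  have hζ0 : ∀ j, ζ j ≠ 0 := fun j => Complex.exp_ne_zero _
  have htj_mem : ∀ j : Fin 3, 0 ≤ tj j ∧ tj j ≤ Real.pi := by
    intro j
    constructor
    · rw [htj]; positivity
    · rw [htj]
      rw [div_le_iff₀ hnR]
      have h2 : ((j:ℕ):ℝ) ≤ 2 := by
        have : (j:ℕ) ≤ 2 := by omega
        exact_mod_cast this
      have h2n : (2:ℝ) ≤ n := by exact_mod_cast hn2
      nlinarith [Real.pi_pos]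
  have hζinj : ∀ i j : Fin 3, ζ i = ζ j → i = j := by
    intro i j heq
    rw [hζ] at heq
    obtain ⟨k, hk⟩ := Complex.exp_eq_exp_iff_exists_int.mp heq
    have hk' : ((tj i : ℝ) : ℂ) * Complex.I = ((tj j + k * (2 * Real.pi) : ℝ) : ℂ) * Complex.I := by
      rw [hk]
      push_cast
      ring
    have hre : tj i = tj j + k * (2 * Real.pi) := by
      have := mul_right_cancel₀ Complex.I_ne_zero hk'
      exact_mod_cast this
    have hk0 : k = 0 := by
      by_contra hkne
      have h1 : (1:ℝ) ≤ |(k:ℝ)| := by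
        have : (1:ℤ) ≤ |k| := Int.one_le_abs (by omega)
        calc (1:ℝ) = ((1:ℤ):ℝ) := by norm_num
        _ ≤ ((|k|:ℤ):ℝ) := by exact_mod_cast this
        _ = |(k:ℝ)| := by push_cast; ring
      have hb1 := htj_mem i
      have hb2 := htj_mem j
      have : |tj i - tj j| ≤ Real.pi := by
        rw [abs_le]; constructor <;> linarith
      rw [hre] at this
      have habs : |(k:ℝ) * (2 * Real.pi)| = |(k:ℝ)| * (2 * Real.pi) := by
        rw [abs_mul, abs_of_pos (by positivity : (0:ℝ) < 2 * Real.pi)]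
      have : |(k:ℝ) * (2 * Real.pi)| ≤ Real.pi := by
        have harg : tj j + (k:ℝ) * (2 * Real.pi) - tj j = (k:ℝ) * (2 * Real.pi) := by ring
        rwa [harg] at this
      rw [habs] at this
      nlinarith [Real.pi_pos]
    rw [hk0] at hre
    simp only [Int.cast_zero, zero_mul, add_zero] at hre
    simp only [htj] at hre
    have hne : (n:ℝ) ≠ 0 := hnR.ne'
    have hval : ((i:ℕ):ℝ) = ((j:ℕ):ℝ) := by
      field_simp at hre
      linarith
    have : (i:ℕ) = (j:ℕ) := by exact_mod_cast hval
    omega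
  have hζpow : ∀ j : Fin 3, ζ j ^ n = 1 ∨ ζ j ^ n = -1 := by
    intro j
    have hp : ζ j ^ n = Complex.exp ((n:ℂ) * (((tj j : ℝ):ℂ) * Complex.I)) := by
      rw [hζ, Complex.exp_nat_mul]
    have harg : (n:ℂ) * (((tj j : ℝ):ℂ) * Complex.I)
        = ((j:ℕ):ℕ) * ((Real.pi:ℂ) * Complex.I) := by
      simp only [htj]
      push_cast
      field_simp
    rw [hp, harg, Complex.exp_nat_mul, Complex.exp_pi_mul_I]
    rcases Nat.even_or_odd ((j:ℕ)) with hpar | hpar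
    · left; exact hpar.neg_one_pow
    · right; exact hpar.neg_one_pow
  -- the arcs
  set p : Fin 3 → ℝ → ℂ := fun j s => e.symm ((s:ℂ) * ζ j) with hp
  have hsmem : ∀ s ∈ Icc (0:ℝ) ε, ∀ j, (s:ℂ) * ζ j ∈ Metric.ball (0:ℂ) δ := by
    intro s hs j
    simp only [Metric.mem_ball, dist_zero_right, norm_mul, hζabs j,
      mul_one, Complex.norm_real, Real.norm_eq_abs, _root_.abs_of_nonneg hs.1]
    have := hs.2
    rw [hε] at this
    linarith
  have hptgt : ∀ s ∈ Icc (0:ℝ) ε, ∀ j, ((s:ℂ) * ζ j) ∈ e.target :=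
    fun s hs j => (hballδ (hsmem s hs j)).1
  have hpball : ∀ s ∈ Icc (0:ℝ) ε, ∀ j, p j s ∈ Metric.ball z₀ r₀ :=
    fun s hs j => (hballδ (hsmem s hs j)).2
  have hpD : ∀ s ∈ Icc (0:ℝ) ε, ∀ j, p j s ∈ D :=
    fun s hs j => (hball₀ (hpball s hs j)).1.1
  have hφp : ∀ s ∈ Icc (0:ℝ) ε, ∀ j, φ (p j s) = (s:ℂ) * ζ j := by
    intro s hs j
    rw [hp, ← hecoe]
    exact e.right_inv (hptgt s hs j)
  have hFp : ∀ s ∈ Icc (0:ℝ) ε, ∀ j, F (p j s) = F z₀ + ((s:ℂ) * ζ j) ^ n := by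
    intro s hs j
    have := (hball₀ (hpball s hs j)).2
    rw [mem_setOf_eq] at this
    rw [this, hφp s hs j]
  have hFim : ∀ s ∈ Icc (0:ℝ) ε, ∀ j, (F (p j s)).im = (F z₀).im := by
    intro s hs j
    rw [hFp s hs j]
    have : (((s:ℂ) * ζ j) ^ n).im = 0 := by
      rcases hζpow j with h | h <;>
        simp [mul_pow, h, ← Complex.ofReal_pow]
    rw [Complex.add_im, this, add_zero]
  -- apply the triod lemma
  apply no_triod ε hεpos z₀ p (fun z => (f z).re)
  · intro j
    rw [hp]
    simp only [Complex.ofReal_zero, zero_mul]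
    exact hsymm0
  · intro j
    apply Complex.continuous_re.comp_continuousOn
    apply hfc.comp ?_ (fun s hs => hpD s hs j)
    apply (e.continuousOn_symm.comp ?_ ?_)
    · exact (Complex.continuous_ofReal.mul continuous_const).continuousOn
    · intro s hs
      exact hptgt s hs j
  · intro i j hij s hs s' hs' heq
    have h1 : φ (p i s) = φ (p j s') := by rw [heq]
    rw [hφp s hs i, hφp s' hs' j] at h1
    have habs : ‖(s:ℂ) * ζ i‖ = ‖(s':ℂ) * ζ j‖ := by rw [h1]
    rw [norm_mul, norm_mul, hζabs i, hζabs j, mul_one, mul_one, Complex.norm_real, Real.norm_eq_abs,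
      Complex.norm_real, Real.norm_eq_abs, _root_.abs_of_nonneg hs.1, _root_.abs_of_nonneg hs'.1] at habs
    by_contra hs0
    have : ζ i = ζ j := by
      rw [← habs] at h1
      exact mul_left_cancel₀ (by exact_mod_cast hs0) h1
    exact hij (hζinj i j this)
  · intro i j s hs s' hs' heq
    have hQeq : f (p i s) = f (p j s') := by
      apply Complex.ext heq
      rw [hIm _ (hpD s hs i), hIm _ (hpD s' hs' j), hFim s hs i, hFim s' hs' j]
    exact hfi (hpD s hs i) (hpD s' hs' j) hQeq
  · intro j hc
    have h1 : φ (p j ε) = (ε:ℂ) * ζ j :=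
      hφp ε (right_mem_Icc.mpr hεpos.le) j
    rw [hc, hφ0] at h1
    have : (ε:ℂ) ≠ 0 := by exact_mod_cast hεpos.ne'
    exact (mul_ne_zero this (hζ0 j)) h1.symm

/-- If `f` is injective and continuous on the disk, with the same imaginary part as an
analytic `F` with nonvanishing derivative, then `f` admits continuous local sections
over horizontal slices. -/
lemma exists_section_of_injOn (F f : ℂ → ℂ)
    (hFa : AnalyticOnNhd ℂ F (Metric.ball (0:ℂ) 1))
    (hfc : ContinuousOn f (Metric.ball (0:ℂ) 1))
    (hfi : InjOn f (Metric.ball (0:ℂ) 1))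
    (hIm : ∀ z ∈ Metric.ball (0:ℂ) 1, (f z).im = (F z).im)
    (hd : ∀ z ∈ Metric.ball (0:ℂ) 1, deriv F z ≠ 0)
    (c : ℝ) :
    ∃ Z : ℝ → ℂ,
      ContinuousOn Z {x : ℝ | (x:ℂ) + c * Complex.I ∈ f '' Metric.ball (0:ℂ) 1} ∧
      ∀ x ∈ {x : ℝ | (x:ℂ) + c * Complex.I ∈ f '' Metric.ball (0:ℂ) 1},
        Z x ∈ Metric.ball (0:ℂ) 1 ∧ f (Z x) = (x:ℂ) + c * Complex.I := by
  set D := Metric.ball (0:ℂ) 1 with hD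
  have hDopen : IsOpen D := Metric.isOpen_ball
  set A : Set ℝ := {x : ℝ | (x:ℂ) + c * Complex.I ∈ f '' D} with hA
  set Z : ℝ → ℂ := fun x => @dite _ (∃ z, z ∈ D ∧ f z = (x:ℂ) + c * Complex.I)
    (Classical.dec _) (fun hx => hx.choose) (fun _ => 0) with hZdef
  have hZspec : ∀ x ∈ A, Z x ∈ D ∧ f (Z x) = (x:ℂ) + c * Complex.I := by
    intro x hx
    obtain ⟨z, hz, hfz⟩ := hx
    have hex : ∃ z, z ∈ D ∧ f z = (x:ℂ) + c * Complex.I := ⟨z, hz, hfz⟩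
    simp only [hZdef, dif_pos hex]
    exact hex.choose_spec
  refine ⟨Z, ?_, hZspec⟩
  intro x₀ hx₀
  obtain ⟨hz₀D, hz₀f⟩ := hZspec x₀ hx₀
  set z₀ := Z x₀ with hz₀
  rw [ContinuousWithinAt, Filter.tendsto_def]
  intro W hW
  obtain ⟨r, hr, hball⟩ := Metric.mem_nhds_iff.mp (Filter.inter_mem hW (hDopen.mem_nhds hz₀D))
  -- local inverse of F at z₀
  have hstrict : HasStrictDerivAt F (deriv F z₀) z₀ :=
    ((hFa z₀ hz₀D).contDiffAt : ContDiffAt ℂ 1 F z₀).hasStrictDerivAt one_ne_zero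
  set e := (hstrict.hasStrictFDerivAt_equiv (hd z₀ hz₀D)).toOpenPartialHomeomorph F with he
  have hecoe : ⇑e = F := HasStrictFDerivAt.toOpenPartialHomeomorph_coe _
  have hz₀src : z₀ ∈ e.source := HasStrictFDerivAt.mem_toOpenPartialHomeomorph_source _
  obtain ⟨r', hr', hball'⟩ : ∃ r' > 0, Metric.ball z₀ r' ⊆
      Metric.ball z₀ r ∩ e.source := by
    apply Metric.mem_nhds_iff.mp
    exact Filter.inter_mem (Metric.ball_mem_nhds z₀ hr) (e.open_source.mem_nhds hz₀src)
  set V : Set ℂ := e '' Metric.ball z₀ r' with hV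
  have hVopen : IsOpen V :=
    e.isOpen_image_of_subset_source Metric.isOpen_ball (fun y hy => (hball' hy).2)
  have hVtarget : V ⊆ e.target := by
    rintro y ⟨z', hz', rfl⟩
    exact e.map_source (hball' hz').2
  have himz₀ : (F z₀).im = c := by
    rw [← hIm z₀ hz₀D, hz₀f]
    simp
  set xh : ℝ := (F z₀).re with hxh
  have hxhF : (xh:ℂ) + c * Complex.I = F z₀ := by
    rw [hxh, ← himz₀, Complex.re_add_im]
  have hFz₀V : F z₀ ∈ V := by
    refine ⟨z₀, Metric.mem_ball_self hr', ?_⟩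
    rw [hecoe]
  set O : Set ℝ := (fun x : ℝ => (x:ℂ) + c * Complex.I) ⁻¹' V with hO
  have hOopen : IsOpen O := hVopen.preimage (Complex.continuous_ofReal.add continuous_const)
  have hxhO : xh ∈ O := by
    show (xh:ℂ) + c * Complex.I ∈ V
    rw [hxhF]; exact hFz₀V
  obtain ⟨δ, hδ, hballxh⟩ := Metric.mem_nhds_iff.mp (hOopen.mem_nhds hxhO)
  set α : ℝ → ℂ := fun x => e.symm ((x:ℂ) + c * Complex.I) with hα
  have hkey : ∀ x ∈ Metric.ball xh δ, α x ∈ Metric.ball z₀ r' ∧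
      F (α x) = (x:ℂ) + c * Complex.I := by
    intro x hx
    obtain ⟨z', hz', hez'⟩ := hballxh hx
    have hz'src : z' ∈ e.source := (hball' hz').2
    have hez'' : (e : ℂ → ℂ) z' = (x:ℂ) + c * Complex.I := hez'
    have hαx : α x = z' := by
      show e.symm ((x:ℂ) + c * Complex.I) = z'
      rw [← hez'', e.left_inv hz'src]
    constructor
    · rw [hαx]; exact hz'
    · rw [hαx, ← hecoe, hez']
  have hαD : ∀ x ∈ Metric.ball xh δ, α x ∈ D :=
    fun x hx => (hball (hball' (hkey x hx).1).1).2
  set q : ℝ → ℝ := fun x => (f (α x)).re with hq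
  set J : Set ℝ := Icc (xh - δ/2) (xh + δ/2) with hJ
  have hJball : J ⊆ Metric.ball xh δ := by
    intro y hy
    rw [Metric.mem_ball, Real.dist_eq, abs_sub_lt_iff]
    constructor <;> [linarith [hy.2]; linarith [hy.1]]
  have hαc : ContinuousOn α (Metric.ball xh δ) := by
    rw [hα]
    apply e.continuousOn_symm.comp
    · exact (Complex.continuous_ofReal.add continuous_const).continuousOn
    · intro x hx
      exact hVtarget (hballxh hx)
  have hqc : ContinuousOn q J := by
    apply Complex.continuous_re.comp_continuousOn
    exact (hfc.comp (hαc.mono hJball) (fun x hx => hαD x (hJball hx)))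
  have hfim : ∀ x ∈ Metric.ball xh δ, (f (α x)).im = c := by
    intro x hx
    rw [hIm _ (hαD x hx), (hkey x hx).2]
    simp
  have hqi : InjOn q J := by
    intro x₁ hx₁ x₂ hx₂ hqe
    have hfe : f (α x₁) = f (α x₂) := by
      apply Complex.ext hqe
      rw [hfim _ (hJball hx₁), hfim _ (hJball hx₂)]
    have hαe : α x₁ = α x₂ := hfi (hαD _ (hJball hx₁)) (hαD _ (hJball hx₂)) hfe
    have h1 := (hkey _ (hJball hx₁)).2
    have h2 := (hkey _ (hJball hx₂)).2
    rw [hαe] at h1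
    rw [h1] at h2
    have : (x₁:ℂ) = (x₂:ℂ) := by
      have := add_right_cancel h2
      exact this
    exact_mod_cast this
  have hqxh : q xh = x₀ := by
    have hz₀ball : xh ∈ Metric.ball xh δ := Metric.mem_ball_self hδ
    have hαxh : α xh = z₀ := by
      rw [hα]
      simp only
      rw [hxhF, ← hecoe, e.left_inv hz₀src]
    rw [hq]
    simp only
    rw [hαxh, hz₀f]
    simp
  obtain ⟨u, v, hu, hv, hImg⟩ := image_nbhd_of_injOn
    (show xh - δ/2 < xh by linarith) (show xh < xh + δ/2 by linarith) hqc hqi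
  rw [hqxh] at hu hv
  apply mem_nhdsWithin.mpr
  refine ⟨Ioo u v, isOpen_Ioo, ⟨hu, hv⟩, ?_⟩
  rintro x ⟨hxIoo, hxA⟩
  obtain ⟨s, hs, hqs⟩ := hImg hxIoo
  have hsball : s ∈ Metric.ball xh δ := hJball hs
  have hfαs : f (α s) = (x:ℂ) + c * Complex.I := by
    have h1 : f (α s) = ((f (α s)).re : ℂ) + c * Complex.I := by
      rw [← hfim s hsball, Complex.re_add_im]
    have hqs' : (f (α s)).re = x := hqs
    rw [h1, hqs']
  obtain ⟨hZxD, hZxf⟩ := hZspec x hxA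
  have : Z x = α s := hfi hZxD (hαD s hsball) (by rw [hZxf, hfαs])
  show Z x ∈ W
  rw [this]
  exact (hball (hball' (hkey s hsball).1).1).1


/-- A set `S ⊆ ℂ` is convex in the horizontal direction (CHD) if its intersection
with each horizontal line is order-connected (an interval, possibly empty). -/
def ConvexHorizontalDirection (S : Set ℂ) : Prop :=
  ∀ c : ℝ, Set.OrdConnected {x : ℝ | (x : ℂ) + c * Complex.I ∈ S}

/-- Clunie–Sheil-Small shear construction theorem. -/
theorem clunie_sheil_small
    (h g : ℂ → ℂ)
    (hh : DifferentiableOn ℂ h (Metric.ball (0 : ℂ) 1))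
    (hg : DifferentiableOn ℂ g (Metric.ball (0 : ℂ) 1))
    (hg0 : g 0 = 0)
    (f : ℂ → ℂ)
    (hf : ∀ z, f z = h z + (starRingEnd ℂ) (g z))
    (hloc : ∀ z ∈ Metric.ball (0 : ℂ) 1, ∃ U ∈ nhds z,
      U ⊆ Metric.ball (0 : ℂ) 1 ∧ Set.InjOn f U) :
    (Set.InjOn f (Metric.ball (0 : ℂ) 1) ∧
        ConvexHorizontalDirection (f '' Metric.ball (0 : ℂ) 1)) ↔
      (Set.InjOn (fun z => h z - g z) (Metric.ball (0 : ℂ) 1) ∧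
        ConvexHorizontalDirection ((fun z => h z - g z) '' Metric.ball (0 : ℂ) 1)) := by
  set D := Metric.ball (0:ℂ) 1 with hD
  set F : ℂ → ℂ := fun z => h z - g z with hF
  have hDopen : IsOpen D := Metric.isOpen_ball
  have hFd : DifferentiableOn ℂ F D := hh.sub hg
  have hFa : AnalyticOnNhd ℂ F D := hFd.analyticOnNhd hDopen
  have hFc : ContinuousOn F D := hFd.continuousOn
  have hfc : ContinuousOn f D := by
    have h1 : ContinuousOn (fun z => h z + (starRingEnd ℂ) (g z)) D :=
      hh.continuousOn.add (Complex.continuous_conj.comp_continuousOn hg.continuousOn)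
    exact h1.congr (fun z _ => hf z)
  have hIm : ∀ z : ℂ, (f z).im = (F z).im := by
    intro z
    rw [hf z, hF]
    simp only [Complex.add_im, Complex.sub_im, Complex.conj_im]
    ring
  constructor
  · rintro ⟨hfi, hfchd⟩
    -- F is nonconstant
    have hnc : ∀ w : ℂ, ¬ ∀ z ∈ D, F z = w := by
      intro w hw
      apply no_injOn_re_ball (fun z => (g z).re)
      · exact Complex.continuous_re.comp_continuousOn hg.continuousOn
      · intro z₁ hz₁ z₂ hz₂ hre
        have key : ∀ z ∈ D, f z = w + ((2 * (g z).re : ℝ) : ℂ) := by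
          intro z hz
          rw [hf z]
          have hFz : F z = w := hw z hz
          have hhz : h z = w + g z := by
            have : h z - g z = w := hFz
            linear_combination this
          rw [hhz, add_assoc, Complex.add_conj]
        apply hfi hz₁ hz₂
        have hre' : (g z₁).re = (g z₂).re := hre
        rw [key z₁ hz₁, key z₂ hz₂, hre']
    have hd : ∀ z ∈ D, deriv F z ≠ 0 := fun z hz =>
      deriv_ne_zero_of_injOn F f hFa hfc hfi (fun z _ => hIm z) hnc hz
    have hQloc : ∀ z ∈ D, ∃ U ∈ nhds z, U ⊆ D ∧ Set.InjOn F U := by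
      intro z hz
      have hstrict : HasStrictDerivAt F (deriv F z) z :=
        ((hFa z hz).contDiffAt : ContDiffAt ℂ 1 F z).hasStrictDerivAt one_ne_zero
      set e := (hstrict.hasStrictFDerivAt_equiv (hd z hz)).toOpenPartialHomeomorph F with he
      have hsrc : z ∈ e.source := HasStrictFDerivAt.mem_toOpenPartialHomeomorph_source _
      refine ⟨e.source ∩ D,
        Filter.inter_mem (e.open_source.mem_nhds hsrc) (hDopen.mem_nhds hz),
        Set.inter_subset_right, ?_⟩
      have hinj : Set.InjOn (⇑e) e.source := e.injOn
      rw [HasStrictFDerivAt.toOpenPartialHomeomorph_coe] at hinj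
      exact hinj.mono Set.inter_subset_left
    exact core_transfer f F hfi hfchd hFc (fun z _ => hIm z) hQloc
      (fun c => exists_section_of_injOn F f hFa hfc hfi (fun z _ => hIm z) hd c)
  · rintro ⟨hFinj, hFchd⟩
    exact core_transfer F f hFinj hFchd hfc (fun z _ => (hIm z).symm) hloc
      (fun c => exists_section_of_analytic F hFa hFinj c)
end

section
/- Let φ be analytic and injective on the unit disk 𝔻 with φ(0) = 0 and φ(𝔻) convex in the horizontal direction, and let ω be analytic on 𝔻 with |ω(z)| < 1 for all z ∈ 𝔻. Suppose h and g are analytic on 𝔻 with h(0) = g(0) = 0 and with derivatives h'(z) = φ'(z)/(1 − ω(z)) and g'(z) = ω(z)·φ'(z)/(1 − ω(z)) for all z ∈ 𝔻. Then the harmonic shear f(z) = h(z) + conj(g(z)) is injective on 𝔻 and its image f(𝔻) is convex in the horizontal direction. -/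
open Complex Filter Set Topology


lemma deriv_ne_zero_of_injOn_s1 {s : Set ℂ} (hs : IsOpen s) {f : ℂ → ℂ}
    (hd : DifferentiableOn ℂ f s) (hi : Set.InjOn f s) {z : ℂ} (hz : z ∈ s) :
    deriv f z ≠ 0 := by
  intro h0
  have hmem : s ∈ 𝓝 z := hs.mem_nhds hz
  have hfa : AnalyticAt ℂ (fun w => f w - f z) z :=
    (hd.analyticAt hmem).sub analyticAt_const
  -- order is finite
  have hne : analyticOrderAt (fun w => f w - f z) z ≠ ⊤ := by
    intro htop
    have hev : ∀ᶠ w in 𝓝 z, f w - f z = 0 := analyticOrderAt_eq_top.mp htop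
    have hmem' : ∀ᶠ w in 𝓝 z, w ∈ s := hmem
    have h2 : ∀ᶠ w in 𝓝[≠] z, w ∈ s ∧ f w - f z = 0 :=
      ((hmem'.and hev).filter_mono nhdsWithin_le_nhds)
    obtain ⟨w, ⟨hws, hw0⟩, hwne⟩ := (h2.and self_mem_nhdsWithin).exists
    exact hwne (hi hws hz (by linear_combination hw0))
  obtain ⟨n, hn⟩ : ∃ n : ℕ, analyticOrderAt (fun w => f w - f z) z = n := by
    cases hcase : analyticOrderAt (fun w => f w - f z) z with
    | top => exact absurd hcase hne
    | coe n => exact ⟨n, rfl⟩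
  obtain ⟨u, hu_an, hu0, hu_eq⟩ := hfa.analyticOrderAt_eq_natCast.mp hn
  -- n ≥ 2
  have hn0 : n ≠ 0 := by
    intro h
    subst h
    have := hu_eq.self_of_nhds
    simp at this
    exact hu0 this.symm
  have hn1 : n ≠ 1 := by
    intro h
    subst h
    have hder : HasDerivAt (fun w => (w - z) ^ 1 • u w) (u z) z := by
      have := ((hasDerivAt_id z).sub_const z).mul hu_an.differentiableAt.hasDerivAt
      simpa [Pi.mul_def] using this
    have hder2 : HasDerivAt (fun w => f w - f z) (u z) z :=
      hder.congr_of_eventuallyEq hu_eq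
    have : deriv (fun w => f w - f z) z = u z := hder2.deriv
    rw [deriv_sub_const, h0] at this
    exact hu0 this.symm
  have hn2 : 2 ≤ n := by omega
  have hnC : (n : ℂ) ≠ 0 := Nat.cast_ne_zero.mpr hn0
  -- local n-th root of u
  set v : ℂ → ℂ := fun w => Complex.exp ((Complex.log (u z) + Complex.log (u w / u z)) / n) with hv_def
  have hq_an : AnalyticAt ℂ (fun w => u w / u z) z := hu_an.div analyticAt_const hu0
  have hq1 : u z / u z = 1 := div_self hu0
  have hv_an : AnalyticAt ℂ v z := by
    apply AnalyticAt.cexp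
    apply AnalyticAt.div _ analyticAt_const hnC
    exact analyticAt_const.add (hq_an.clog (by rw [hq1]; exact one_mem_slitPlane))
  have hv_pow : ∀ᶠ w in 𝓝 z, v w ^ n = u w := by
    have hune : ∀ᶠ w in 𝓝 z, u w ≠ 0 := hu_an.continuousAt.eventually_ne hu0
    filter_upwards [hune] with w hw
    have hdne : u w / u z ≠ 0 := div_ne_zero hw hu0
    rw [hv_def]
    rw [← Complex.exp_nat_mul]
    rw [mul_div_cancel₀ _ hnC, Complex.exp_add, Complex.exp_log hu0, Complex.exp_log hdne]
    field_simp
  set w : ℂ → ℂ := fun w' => (w' - z) * v w' with hw_def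
  have hvz_ne : v z ≠ 0 := Complex.exp_ne_zero _
  have hv_strict : HasStrictDerivAt v (fderiv ℂ v z 1) z := hv_an.hasStrictFDerivAt.hasStrictDerivAt
  have hw_strict : HasStrictDerivAt w (v z) z := by
    have h1 : HasStrictDerivAt (fun y : ℂ => y - z) (1 - 0) z :=
      (hasStrictDerivAt_id z).sub (hasStrictDerivAt_const z z)
    have h : HasStrictDerivAt (fun y => (y - z) * v y)
        ((1 - 0) * v z + (z - z) * (fderiv ℂ v z 1)) z := h1.mul hv_strict
    simpa using h
  have hF : ∀ᶠ w' in 𝓝 z, (f w' - f z = w w' ^ n ∧ w' ∈ s) := by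
    filter_upwards [hu_eq, hv_pow, (hmem : ∀ᶠ w' in 𝓝 z, w' ∈ s)] with w' h1 h2 h3
    refine ⟨?_, h3⟩
    rw [h1, hw_def]
    simp only [smul_eq_mul, mul_pow, h2]
  have himg : w '' {w' | f w' - f z = w w' ^ n ∧ w' ∈ s} ∈ 𝓝 (0 : ℂ) := by
    have h1 : w '' {w' | f w' - f z = w w' ^ n ∧ w' ∈ s} ∈ Filter.map w (𝓝 z) :=
      Filter.image_mem_map hF
    rwa [hw_strict.map_nhds_eq hvz_ne, show w z = 0 by simp [hw_def]] at h1
  obtain ⟨δ, hδ, hball⟩ := Metric.mem_nhds_iff.mp himg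
  set ζ : ℂ := Complex.exp (2 * Real.pi * Complex.I / n) with hζ_def
  have hprim : IsPrimitiveRoot ζ n := Complex.isPrimitiveRoot_exp n hn0
  have hζn : ζ ^ n = 1 := hprim.pow_eq_one
  have hζ1 : ζ ≠ 1 := by
    intro h
    have h2 : n ∣ 1 := hprim.dvd_of_pow_eq_one 1 (by rw [h, one_pow])
    have := Nat.le_of_dvd one_pos h2
    omega
  have hζabs : ‖ζ‖ = 1 := by
    have : (2 * Real.pi * Complex.I / n) = ((2 * Real.pi / n : ℝ) : ℂ) * Complex.I := by
      push_cast; ring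
    rw [hζ_def, this, Complex.norm_exp_ofReal_mul_I]
  set t : ℂ := ((δ / 2 : ℝ) : ℂ) with ht_def
  have ht_ne : t ≠ 0 := by
    simp only [ht_def, ne_eq, Complex.ofReal_eq_zero]
    positivity
  have ht_abs : ‖t‖ = δ / 2 := by
    rw [ht_def, Complex.norm_real, Real.norm_eq_abs, abs_of_pos (by positivity)]
  have ht_mem : t ∈ Metric.ball (0 : ℂ) δ := by
    simp [Complex.dist_eq, ht_abs]; linarith
  have hζt_mem : ζ * t ∈ Metric.ball (0 : ℂ) δ := by
    simp only [Metric.mem_ball, Complex.dist_eq, sub_zero, norm_mul, hζabs, one_mul, ht_abs]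
    linarith
  obtain ⟨z₁, hz₁, hwz₁⟩ := hball ht_mem
  obtain ⟨z₂, hz₂, hwz₂⟩ := hball hζt_mem
  have heq : f z₁ = f z₂ := by
    have e1 : f z₁ - f z = t ^ n := by rw [hz₁.1, hwz₁]
    have e2 : f z₂ - f z = t ^ n := by
      rw [hz₂.1, hwz₂, mul_pow, hζn, one_mul]
    linear_combination e1 - e2
  have : z₁ = z₂ := hi hz₁.2 hz₂.2 heq
  rw [this, hwz₂] at hwz₁
  have : (ζ - 1) * t = 0 := by linear_combination hwz₁
  rcases mul_eq_zero.mp this with h | h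
  · exact hζ1 (by linear_combination h)
  · exact ht_ne h


lemma re_quot_pos {a : ℂ} (ha : ‖a‖ < 1) : 0 < ((1 + a) / (1 - a)).re := by
  have hne : (1 : ℂ) - a ≠ 0 := by
    intro hc
    have : a = 1 := by linear_combination -hc
    rw [this] at ha; simp at ha
  have hpos : 0 < Complex.normSq (1 - a) := Complex.normSq_pos.mpr hne
  have hsq : Complex.normSq a < 1 := by
    rw [← Complex.sq_norm]
    nlinarith [norm_nonneg a]
  have hkey : ((1 + a) / (1 - a)).re = (1 - Complex.normSq a) / Complex.normSq (1 - a) := by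
    rw [Complex.div_re, ← add_div]
    congr 1
    simp [Complex.normSq_apply]
    ring
  rw [hkey]
  exact div_pos (by linarith) hpos

/-- The harmonic shear `f = h + conj g` of a CHD conformal mapping `φ` with
analytic dilatation `ω`, `|ω| < 1`, is univalent with CHD range. -/
theorem harmonic_shear_univalent_CHD
    (φ ω h g : ℂ → ℂ)
    (hφd : DifferentiableOn ℂ φ (Metric.ball (0 : ℂ) 1))
    (hφi : Set.InjOn φ (Metric.ball (0 : ℂ) 1))
    (hφ0 : φ 0 = 0)
    (hφCHD : ConvexHorizontalDirection (φ '' Metric.ball (0 : ℂ) 1))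
    (hωd : DifferentiableOn ℂ ω (Metric.ball (0 : ℂ) 1))
    (hω1 : ∀ z ∈ Metric.ball (0 : ℂ) 1, ‖ω z‖ < 1)
    (hhd : DifferentiableOn ℂ h (Metric.ball (0 : ℂ) 1))
    (hgd : DifferentiableOn ℂ g (Metric.ball (0 : ℂ) 1))
    (hh0 : h 0 = 0) (hg0 : g 0 = 0)
    (hh' : ∀ z ∈ Metric.ball (0 : ℂ) 1,
      HasDerivAt h (deriv φ z / (1 - ω z)) z)
    (hg' : ∀ z ∈ Metric.ball (0 : ℂ) 1,
      HasDerivAt g (ω z * deriv φ z / (1 - ω z)) z) :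
    Set.InjOn (fun z => h z + (starRingEnd ℂ) (g z)) (Metric.ball (0 : ℂ) 1) ∧
      ConvexHorizontalDirection
        ((fun z => h z + (starRingEnd ℂ) (g z)) '' Metric.ball (0 : ℂ) 1) := by
  set B := Metric.ball (0 : ℂ) 1 with hB
  have hBo : IsOpen B := Metric.isOpen_ball
  have h0B : (0 : ℂ) ∈ B := by simp [hB]
  have hω_ne : ∀ z ∈ B, (1 : ℂ) - ω z ≠ 0 := by
    intro z hz hc
    have h1 := hω1 z hz
    have : ω z = 1 := by linear_combination -hc
    rw [this] at h1; simp at h1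
  have hφder : ∀ z ∈ B, HasDerivAt φ (deriv φ z) z := fun z hz =>
    (hφd.differentiableAt (hBo.mem_nhds hz)).hasDerivAt
  -- h - g = φ on B
  have key : ∀ z ∈ B, HasDerivAt (fun z => h z - g z - φ z) 0 z := by
    intro z hz
    have h1 := ((hh' z hz).sub (hg' z hz)).sub (hφder z hz)
    have hne := hω_ne z hz
    have e : deriv φ z / (1 - ω z) - ω z * deriv φ z / (1 - ω z) - deriv φ z = 0 := by
      rw [div_sub_div_same, show deriv φ z - ω z * deriv φ z = (1 - ω z) * deriv φ z by ring, mul_div_cancel_left₀ _ hne]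
      ring
    rw [e] at h1
    exact h1
  have hHG : ∀ z ∈ B, h z - g z = φ z := by
    intro z hz
    have hconv : Convex ℝ B := convex_ball 0 1
    have hb := hconv.norm_image_sub_le_of_norm_hasFDerivWithin_le
      (f' := fun _ => (0 : ℂ →L[ℝ] ℂ)) (C := 0)
      (fun x hx => by
        have h3 := (key x hx).hasFDerivAt
        have h4 : (ContinuousLinearMap.toSpanSingleton ℂ (0 : ℂ)) = 0 := by ext1; simp
        rw [h4] at h3
        exact (h3.restrictScalars ℝ).hasFDerivWithinAt)
      (fun x _ => by simp) h0B hz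
    simp only [hh0, hg0, hφ0, sub_zero, zero_mul, norm_le_zero_iff] at hb
    linear_combination hb
  -- nonvanishing derivative (uses lemma 1, add later)
  have hφ' : ∀ z ∈ B, deriv φ z ≠ 0 := fun z hz => deriv_ne_zero_of_injOn_s1 hBo hφd hφi hz
  have hφstrict : ∀ z ∈ B, HasStrictDerivAt φ (deriv φ z) z := by
    intro z hz
    have h1 := (hφd.analyticAt (hBo.mem_nhds hz)).hasStrictFDerivAt.hasStrictDerivAt
    simpa [fderiv_apply_one_eq_deriv] using h1
  set Ω : Set ℂ := φ '' B with hΩ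
  set ψ : ℂ → ℂ := Function.invFunOn φ B with hψ
  have hψ_left : ∀ z ∈ B, ψ (φ z) = z := fun z hz => hφi.leftInvOn_invFunOn hz
  have hψ_mem : ∀ w ∈ Ω, ψ w ∈ B := by rintro w ⟨z, hz, rfl⟩; rw [hψ_left z hz]; exact hz
  have hψ_right : ∀ w ∈ Ω, φ (ψ w) = w := by rintro w ⟨z, hz, rfl⟩; rw [hψ_left z hz]
  have hψstrict : ∀ z ∈ B, HasStrictDerivAt ψ (deriv φ z)⁻¹ (φ z) := by
    intro z hz
    refine (hφstrict z hz).to_local_left_inverse (hφ' z hz) ?_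
    filter_upwards [hBo.mem_nhds hz] with x hx using hψ_left x hx
  have hΩo : IsOpen Ω := by
    rw [isOpen_iff_mem_nhds]
    rintro w ⟨z, hz, rfl⟩
    rw [← (hφstrict z hz).map_nhds_eq (hφ' z hz)]
    exact Filter.image_mem_map (hBo.mem_nhds hz)
  -- the monotone real function along horizontal lines
  have hp : ∀ (y : ℝ), ∀ x : ℝ, (x : ℂ) + y * Complex.I ∈ Ω →
      HasDerivAt (fun x : ℝ => (h (ψ ((x : ℂ) + y * Complex.I)) + g (ψ ((x : ℂ) + y * Complex.I))).re)
        (((1 + ω (ψ ((x : ℂ) + y * Complex.I))) / (1 - ω (ψ ((x : ℂ) + y * Complex.I)))).re) x := by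
    intro y x hxΩ
    set w : ℂ := (x : ℂ) + y * Complex.I with hw
    set z : ℂ := ψ w with hzdef
    have hzB : z ∈ B := hψ_mem w hxΩ
    have hφz : φ z = w := hψ_right w hxΩ
    -- inner map L : ℝ → ℂ
    have hL : HasDerivAt (fun x : ℝ => (x : ℂ) + y * Complex.I) 1 x := by
      simpa using (Complex.ofRealCLM.hasDerivAt (x := x)).add_const (y * Complex.I)
    -- (h+g) ∘ ψ : ℂ → ℂ
    have hhg : HasDerivAt (fun w => h w + g w)
        (deriv φ z / (1 - ω z) + ω z * deriv φ z / (1 - ω z)) z := (hh' z hzB).add (hg' z hzB)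
    have hψw : HasDerivAt ψ (deriv φ z)⁻¹ w := by
      have := (hψstrict z hzB).hasDerivAt
      rwa [hφz] at this
    have hcomp : HasDerivAt (fun w => h (ψ w) + g (ψ w))
        ((deriv φ z / (1 - ω z) + ω z * deriv φ z / (1 - ω z)) * (deriv φ z)⁻¹) w := by
      have := HasDerivAt.comp (h₂ := fun w => h w + g w) w (by rw [← hzdef]; exact hhg) hψw
      simpa [Function.comp_def, mul_comm] using this
    have hcomp2 : HasDerivAt
        (fun x : ℝ => h (ψ ((x : ℂ) + y * Complex.I)) + g (ψ ((x : ℂ) + y * Complex.I)))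
        ((deriv φ z / (1 - ω z) + ω z * deriv φ z / (1 - ω z)) * (deriv φ z)⁻¹) x := by
      have := HasDerivAt.scomp_of_eq (x := x)
        (g₁ := fun w => h (ψ w) + g (ψ w)) hcomp hL (by rw [hw])
      simpa [Function.comp_def] using this
    have hre := Complex.reCLM.hasFDerivAt.comp_hasDerivAt x hcomp2
    have hval : Complex.reCLM ((deriv φ z / (1 - ω z) + ω z * deriv φ z / (1 - ω z)) * (deriv φ z)⁻¹)
        = ((1 + ω z) / (1 - ω z)).re := by
      have e1 : (deriv φ z / (1 - ω z) + ω z * deriv φ z / (1 - ω z)) * (deriv φ z)⁻¹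
          = (1 + ω z) / (1 - ω z) := by
        field_simp [hφ' z hzB, hω_ne z hzB]
      rw [e1]; rfl
    rw [hval] at hre
    exact hre
  have hmono : ∀ y : ℝ, StrictMonoOn
      (fun x : ℝ => (h (ψ ((x : ℂ) + y * Complex.I)) + g (ψ ((x : ℂ) + y * Complex.I))).re)
      {x : ℝ | (x : ℂ) + y * Complex.I ∈ Ω} := by
    intro y
    have hIo : IsOpen {x : ℝ | (x : ℂ) + y * Complex.I ∈ Ω} := by
      have hc : Continuous fun x : ℝ => (x : ℂ) + y * Complex.I := by continuity
      exact hΩo.preimage hc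
    have hIconv : Convex ℝ {x : ℝ | (x : ℂ) + y * Complex.I ∈ Ω} := (hφCHD y).convex
    apply strictMonoOn_of_deriv_pos hIconv
    · intro x hx
      exact ((hp y x hx).continuousAt).continuousWithinAt
    · intro x hx
      rw [hIo.interior_eq] at hx
      rw [(hp y x hx).deriv]
      exact re_quot_pos (hω1 _ (hψ_mem _ hx))
  set f : ℂ → ℂ := fun z => h z + (starRingEnd ℂ) (g z) with hf
  have hf_re : ∀ z, (f z).re = (h z + g z).re := by intro z; simp [hf]
  have hf_im : ∀ z ∈ B, (f z).im = (φ z).im := by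
    intro z hz
    rw [← hHG z hz]
    simp [hf]
    ring
  -- injectivity
  have hinj : Set.InjOn f B := by
    intro z₁ hz₁ z₂ hz₂ heq
    have him : (φ z₁).im = (φ z₂).im := by rw [← hf_im z₁ hz₁, ← hf_im z₂ hz₂, heq]
    set y : ℝ := (φ z₁).im with hy
    have hw₁ : ((φ z₁).re : ℂ) + y * Complex.I = φ z₁ := Complex.re_add_im _
    have hw₂ : ((φ z₂).re : ℂ) + y * Complex.I = φ z₂ := by
      rw [show y = (φ z₂).im from him]; exact Complex.re_add_im _
    have ha₁ : (φ z₁).re ∈ {x : ℝ | (x : ℂ) + y * Complex.I ∈ Ω} := by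
      simp only [Set.mem_setOf_eq, hw₁]; exact Set.mem_image_of_mem φ hz₁
    have ha₂ : (φ z₂).re ∈ {x : ℝ | (x : ℂ) + y * Complex.I ∈ Ω} := by
      simp only [Set.mem_setOf_eq, hw₂]; exact Set.mem_image_of_mem φ hz₂
    have hre : (φ z₁).re = (φ z₂).re := by
      apply (hmono y).injOn ha₁ ha₂
      simp only [hw₁, hw₂, hψ_left z₁ hz₁, hψ_left z₂ hz₂]
      rw [← hf_re z₁, ← hf_re z₂, heq]
    exact hφi hz₁ hz₂ (Complex.ext hre him)
  -- CHD of the image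
  have hchd : ∀ c : ℝ, Set.OrdConnected {x : ℝ | (x : ℂ) + c * Complex.I ∈ f '' B} := by
    intro c
    constructor
    intro x₁ hx₁ x₂ hx₂ x hx
    simp only [Set.mem_setOf_eq] at hx₁ hx₂ ⊢
    obtain ⟨z₁, hz₁, hfz₁⟩ := hx₁
    obtain ⟨z₂, hz₂, hfz₂⟩ := hx₂
    have hc₁ : (φ z₁).im = c := by
      rw [← hf_im z₁ hz₁, hfz₁]; simp
    have hc₂ : (φ z₂).im = c := by
      rw [← hf_im z₂ hz₂, hfz₂]; simp
    have hw₁ : ((φ z₁).re : ℂ) + c * Complex.I = φ z₁ := by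
      rw [← hc₁]; exact Complex.re_add_im _
    have hw₂ : ((φ z₂).re : ℂ) + c * Complex.I = φ z₂ := by
      rw [← hc₂]; exact Complex.re_add_im _
    have ha₁ : (φ z₁).re ∈ {x : ℝ | (x : ℂ) + c * Complex.I ∈ Ω} := by
      simp only [Set.mem_setOf_eq, hw₁]; exact Set.mem_image_of_mem φ hz₁
    have ha₂ : (φ z₂).re ∈ {x : ℝ | (x : ℂ) + c * Complex.I ∈ Ω} := by
      simp only [Set.mem_setOf_eq, hw₂]; exact Set.mem_image_of_mem φ hz₂
    have hsub : Set.uIcc (φ z₁).re (φ z₂).re ⊆ {x : ℝ | (x : ℂ) + c * Complex.I ∈ Ω} :=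
      (hφCHD c).uIcc_subset ha₁ ha₂
    set p : ℝ → ℝ := fun x : ℝ =>
      (h (ψ ((x : ℂ) + c * Complex.I)) + g (ψ ((x : ℂ) + c * Complex.I))).re with hpdef
    have hpa₁ : p (φ z₁).re = x₁ := by
      rw [hpdef]
      simp only [hw₁, hψ_left z₁ hz₁]
      rw [← hf_re z₁, hfz₁]; simp
    have hpa₂ : p (φ z₂).re = x₂ := by
      rw [hpdef]
      simp only [hw₂, hψ_left z₂ hz₂]
      rw [← hf_re z₂, hfz₂]; simp
    have hcont : ContinuousOn p (Set.uIcc (φ z₁).re (φ z₂).re) := by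
      intro a ha
      exact ((hp c a (hsub ha)).continuousAt).continuousWithinAt
    have hxmem : x ∈ Set.uIcc (p (φ z₁).re) (p (φ z₂).re) := by
      rw [hpa₁, hpa₂]; exact Set.Icc_subset_uIcc hx
    obtain ⟨a, ha, hpa⟩ := intermediate_value_uIcc hcont hxmem
    have haΩ : (a : ℂ) + c * Complex.I ∈ Ω := hsub ha
    refine ⟨ψ ((a : ℂ) + c * Complex.I), hψ_mem _ haΩ, ?_⟩
    apply Complex.ext
    · rw [hf_re]
      have hrx : ((x : ℂ) + c * Complex.I).re = x := by simp
      rw [hrx]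
      exact hpa
    · rw [hf_im _ (hψ_mem _ haΩ), hψ_right _ haΩ]
      simp
  exact ⟨hinj, hchd⟩
end

section
/- Let a, b, c ∈ ℂ with Re c > Re b > 0, and let z ∈ ℂ with |z| < 1. Then the Gaussian hypergeometric series equals the Euler integral: ∑_{k=0}^∞ ((a)_k (b)_k)/((c)_k · k!) · z^k = (Γ(c)/(Γ(b)·Γ(c−b))) · ∫₀¹ t^{b−1} (1−t)^{c−b−1} (1−zt)^{−a} dt, where the powers t^{b−1}, (1−t)^{c−b−1}, (1−zt)^{−a} are principal-branch complex powers and Γ is the complex Gamma function. -/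
open Complex MeasureTheory Metric

lemma poch_nonneg (x : ℝ) (hx : 0 ≤ x) (k : ℕ) : 0 ≤ (ascPochhammer ℝ k).eval x := by
  induction k with
  | zero => simp
  | succ n ih =>
    rw [ascPochhammer_succ_eval]
    exact mul_nonneg ih (by positivity)

lemma poch_abs_le (a : ℂ) (k : ℕ) :
    ‖(ascPochhammer ℂ k).eval a‖ ≤ (ascPochhammer ℝ k).eval (‖a‖) := by
  induction k with
  | zero => simp
  | succ n ih =>
    rw [ascPochhammer_succ_eval, ascPochhammer_succ_eval, norm_mul]
    have h1 : ‖a + n‖ ≤ ‖a‖ + n := by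
      refine (norm_add_le _ _).trans ?_
      simp
    have h0 : (0:ℝ) ≤ ‖a‖ + n := by positivity
    exact mul_le_mul ih h1 (norm_nonneg _) (poch_nonneg _ (norm_nonneg _) _)

lemma poch_ofReal (x : ℝ) (k : ℕ) :
    (ascPochhammer ℂ k).eval (x : ℂ) = (((ascPochhammer ℝ k).eval x : ℝ) : ℂ) := by
  rw [ascPochhammer_eval₂ Complex.ofRealHom]
  exact Polynomial.eval₂_at_apply Complex.ofRealHom x

lemma poch_ne_zero {x : ℂ} (hx : 0 < x.re) (k : ℕ) : (ascPochhammer ℂ k).eval x ≠ 0 := by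
  induction k with
  | zero => simp
  | succ n ih =>
    rw [ascPochhammer_succ_eval]
    refine mul_ne_zero ih fun h => ?_
    have := congrArg Complex.re h
    simp at this
    have : (0:ℝ) < x.re + n := by positivity
    simp_all

lemma Gamma_add_nat_poch {x : ℂ} (hx : 0 < x.re) (k : ℕ) :
    Complex.Gamma (x + k) = (ascPochhammer ℂ k).eval x * Complex.Gamma x := by
  induction k with
  | zero => simp
  | succ n ih =>
    have hne : x + n ≠ 0 := fun h => by
      have := congrArg Complex.re h
      simp at this
      have : (0:ℝ) < x.re + n := by positivity
      simp_all
    have he : x + ((n+1 : ℕ) : ℂ) = (x + n) + 1 := by push_cast; ring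
    rw [he, Complex.Gamma_add_one _ hne, ih, ascPochhammer_succ_eval]
    ring

lemma one_sub_mem_slitPlane {u : ℂ} (hu : ‖u‖ < 1) : 1 - u ∈ Complex.slitPlane := by
  apply Or.inl
  simp only [Complex.sub_re, Complex.one_re]
  have : u.re ≤ ‖u‖ := Complex.re_le_norm u
  linarith

lemma hasDerivAt_one_sub_cpow (s : ℂ) {u : ℂ} (hu : ‖u‖ < 1) :
    HasDerivAt (fun w : ℂ => (1 - w) ^ s) (s * (1 - u) ^ (s - 1) * (-1)) u :=
  ((hasDerivAt_id u).const_sub 1).cpow_const (one_sub_mem_slitPlane hu)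

lemma iteratedDeriv_one_sub_cpow (a : ℂ) (n : ℕ) :
    ∀ {u : ℂ}, ‖u‖ < 1 →
    iteratedDeriv n (fun w : ℂ => (1 - w) ^ (-a)) u
      = (ascPochhammer ℂ n).eval a * (1 - u) ^ (-a - n) := by
  induction n with
  | zero => intro u hu; simp
  | succ n ih =>
    intro u hu
    rw [iteratedDeriv_succ]
    have hmem : {w : ℂ | ‖w‖ < 1} ∈ nhds u := by
      have : {w : ℂ | ‖w‖ < 1} = Metric.ball (0:ℂ) 1 := by
        ext w; simp [Metric.mem_ball, Complex.dist_eq]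
      rw [this]
      exact Metric.isOpen_ball.mem_nhds (by simpa [Metric.mem_ball, Complex.dist_eq] using hu)
    have hev : iteratedDeriv n (fun w : ℂ => (1 - w) ^ (-a)) =ᶠ[nhds u]
        fun w => (ascPochhammer ℂ n).eval a * (1 - w) ^ (-a - n) := by
      filter_upwards [hmem] with w hw
      exact ih hw
    rw [hev.deriv_eq]
    have hd : HasDerivAt (fun w : ℂ => (ascPochhammer ℂ n).eval a * (1 - w) ^ (-a - n))
        ((ascPochhammer ℂ n).eval a * ((-a - n) * (1 - u) ^ (-a - n - 1) * (-1))) u :=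
      (hasDerivAt_one_sub_cpow (-a - n) hu).const_mul _
    rw [hd.deriv, ascPochhammer_succ_eval]
    have he : -a - (n:ℂ) - 1 = -a - ((n+1 : ℕ) : ℂ) := by push_cast; ring
    rw [he]
    push_cast
    ring

lemma binomial_hasSum (a : ℂ) {w : ℂ} (hw : ‖w‖ < 1) :
    HasSum (fun k : ℕ => (ascPochhammer ℂ k).eval a / (Nat.factorial k : ℂ) * w ^ k)
      ((1 - w) ^ (-a)) := by
  have hdiff : DifferentiableOn ℂ (fun w : ℂ => (1 - w) ^ (-a)) (Metric.ball (0:ℂ) 1) :=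
    fun u hu => (hasDerivAt_one_sub_cpow (-a)
      (by simpa [Metric.mem_ball, Complex.dist_eq] using hu)).differentiableAt.differentiableWithinAt
  have hw' : w ∈ Metric.ball (0:ℂ) 1 := by simpa [Metric.mem_ball, Complex.dist_eq] using hw
  have H := Complex.hasSum_taylorSeries_on_ball hdiff hw'
  have heq : (fun n : ℕ => (n.factorial : ℂ)⁻¹ • (w - 0) ^ n •
      iteratedDeriv n (fun w : ℂ => (1 - w) ^ (-a)) 0)
      = fun k : ℕ => (ascPochhammer ℂ k).eval a / (Nat.factorial k : ℂ) * w ^ k := by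
    funext n
    rw [iteratedDeriv_one_sub_cpow a n (by simp)]
    simp only [sub_zero, smul_eq_mul, Complex.one_cpow]
    ring
  rwa [heq] at H



/-- Euler integral representation of the Gaussian hypergeometric function:
for `Re c > Re b > 0` and `|z| < 1`,
`∑ (a)_k (b)_k / ((c)_k k!) z^k = Γ(c)/(Γ(b)Γ(c-b)) ∫₀¹ t^(b-1)(1-t)^(c-b-1)(1-zt)^(-a) dt`. -/
theorem hypergeometric_euler_integral
    (a b c : ℂ) (hb : 0 < b.re) (hcb : b.re < c.re)
    (z : ℂ) (hz : ‖z‖ < 1) :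
    ∑' k : ℕ,
        (Polynomial.eval a (ascPochhammer ℂ k) * Polynomial.eval b (ascPochhammer ℂ k)) /
          (Polynomial.eval c (ascPochhammer ℂ k) * (Nat.factorial k : ℂ)) * z ^ k =
      Complex.Gamma c / (Complex.Gamma b * Complex.Gamma (c - b)) *
        ∫ t in (0:ℝ)..1,
          (t : ℂ) ^ (b - 1) * ((1 : ℂ) - (t : ℂ)) ^ (c - b - 1) *
            ((1 : ℂ) - z * (t : ℂ)) ^ (-a) := by
  have hc : 0 < c.re := hb.trans hcb
  have hb' : 0 < (c - b).re := by simp only [Complex.sub_re]; linarith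
  have hΓb : Complex.Gamma b ≠ 0 := Complex.Gamma_ne_zero_of_re_pos hb
  have hΓcb : Complex.Gamma (c - b) ≠ 0 := Complex.Gamma_ne_zero_of_re_pos hb'
  have hΓc : Complex.Gamma c ≠ 0 := Complex.Gamma_ne_zero_of_re_pos hc
  set μ := volume.restrict (Set.Ioc (0:ℝ) 1) with hμ
  set F : ℕ → ℝ → ℂ := fun k t =>
    ((ascPochhammer ℂ k).eval a / (Nat.factorial k : ℂ) * (z * t) ^ k) *
      ((t : ℂ) ^ (b - 1) * ((1:ℂ) - (t:ℂ)) ^ (c - b - 1)) with hF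
  set G : ℝ → ℂ := fun t =>
    (t : ℂ) ^ (b - 1) * ((1:ℂ) - (t:ℂ)) ^ (c - b - 1) * ((1:ℂ) - z * t) ^ (-a) with hG
  set dk : ℕ → ℂ := fun k => (ascPochhammer ℂ k).eval a / (Nat.factorial k : ℂ) * z ^ k with hdk
  set Hk : ℕ → ℝ → ℂ := fun k t =>
    (t : ℂ) ^ (b + k - 1) * ((1:ℂ) - (t:ℂ)) ^ (c - b - 1) with hHk
  have hbk : ∀ k : ℕ, 0 < (b + (k:ℂ)).re := fun k => by
    have : (b + (k:ℂ)).re = b.re + k := by simp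
    rw [this]; positivity
  -- pointwise sum
  have hsum : ∀ t ∈ Set.Ioc (0:ℝ) 1, HasSum (fun k => F k t) (G t) := by
    intro t ht
    have hzt : ‖z * t‖ < 1 := by
      rw [norm_mul]
      calc ‖z‖ * ‖(t:ℂ)‖ ≤ ‖z‖ * 1 := by
            refine mul_le_mul_of_nonneg_left ?_ (norm_nonneg z)
            rw [Complex.norm_real, Real.norm_eq_abs, abs_of_pos ht.1]; exact ht.2
        _ < 1 := by rwa [mul_one]
    have := (binomial_hasSum a hzt).mul_right
      ((t : ℂ) ^ (b - 1) * ((1:ℂ) - (t:ℂ)) ^ (c - b - 1))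
    simpa [hF, hG, mul_comm] using this
  -- equality F k = dk k • Hk k on Ioc
  have hFk_eq : ∀ k : ℕ, ∀ t ∈ Set.Ioc (0:ℝ) 1, F k t = dk k * Hk k t := by
    intro k t ht
    have ht0 : (t : ℂ) ≠ 0 := by
      simp only [ne_eq, Complex.ofReal_eq_zero]; exact ne_of_gt ht.1
    have h1 : (t : ℂ) ^ (b + k - 1) = (t : ℂ) ^ (b - 1) * (t : ℂ) ^ (k : ℕ) := by
      rw [show b + (k:ℂ) - 1 = (b - 1) + (k:ℂ) by ring, Complex.cpow_add _ _ ht0,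
        Complex.cpow_natCast]
    simp only [hF, hHk, hdk, h1, mul_pow]
    ring
  -- integrability of Hk
  have hHk_int : ∀ k : ℕ, IntegrableOn (Hk k) (Set.Ioc (0:ℝ) 1) := by
    intro k
    have := (Complex.betaIntegral_convergent (hbk k) hb').1
    simpa [hHk] using this
  have hFk_int : ∀ k : ℕ, Integrable (F k) μ := by
    intro k
    refine (((hHk_int k).const_mul (dk k)).congr ?_)
    exact (ae_restrict_iff' measurableSet_Ioc).2 (ae_of_all _ fun t ht => (hFk_eq k t ht).symm)
  -- value of each integral
  have hFk_val : ∀ k : ℕ, ∫ t, F k t ∂μ = dk k * Complex.betaIntegral (b + k) (c - b) := by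
    intro k
    have h1 : ∫ t, F k t ∂μ = ∫ t, dk k * Hk k t ∂μ := by
      refine integral_congr_ae ?_
      exact (ae_restrict_iff' measurableSet_Ioc).2 (ae_of_all _ fun t ht => hFk_eq k t ht)
    rw [h1, integral_const_mul]
    congr 1
    rw [Complex.betaIntegral, intervalIntegral.integral_of_le zero_le_one]
  -- norm bound function
  set g : ℝ → ℝ := fun t => ‖(t : ℂ) ^ (b - 1) * ((1:ℂ) - (t:ℂ)) ^ (c - b - 1)‖ with hg
  have hg_int : IntegrableOn g (Set.Ioc (0:ℝ) 1) := by
    have := (Complex.betaIntegral_convergent hb hb').1.norm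
    simpa [hg, IntegrableOn] using this
  set ek : ℕ → ℝ := fun k =>
    ‖(ascPochhammer ℂ k).eval a‖ / (Nat.factorial k : ℝ) * (‖z‖) ^ k
    with hek
  have hek_nonneg : ∀ k, 0 ≤ ek k := fun k => by
    rw [hek]; positivity
  have hnorm_le : ∀ k : ℕ, ∀ t ∈ Set.Ioc (0:ℝ) 1, ‖F k t‖ ≤ ek k * g t := by
    intro k t ht
    rw [hF, hg, hek]
    simp only [norm_mul, norm_pow, norm_div, map_mul]
    have h1 : (‖z‖ * ‖(t:ℂ)‖) ^ k ≤ ‖z‖ ^ k := by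
      refine pow_le_pow_left₀ (by positivity) ?_ k
      calc ‖z‖ * ‖(t:ℂ)‖ ≤ ‖z‖ * 1 := by
            refine mul_le_mul_of_nonneg_left ?_ (norm_nonneg z)
            rw [Complex.norm_real, Real.norm_eq_abs, abs_of_pos ht.1]; exact ht.2
        _ = ‖z‖ := mul_one _
    have h2 : ‖(Nat.factorial k : ℂ)‖ = (Nat.factorial k : ℝ) := by
      rw [Complex.norm_natCast]
    rw [h2]
    calc ‖(ascPochhammer ℂ k).eval a‖ / (Nat.factorial k : ℝ) *
          (‖z‖ * ‖(t:ℂ)‖) ^ k *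
          (‖(t:ℂ) ^ (b-1)‖ * ‖((1:ℂ) - (t:ℂ)) ^ (c-b-1)‖)
        ≤ ‖(ascPochhammer ℂ k).eval a‖ / (Nat.factorial k : ℝ) *
          ‖z‖ ^ k *
          (‖(t:ℂ) ^ (b-1)‖ * ‖((1:ℂ) - (t:ℂ)) ^ (c-b-1)‖) := by
          refine mul_le_mul_of_nonneg_right (mul_le_mul_of_nonneg_left h1 (by positivity))
            (by positivity)
      _ = _ := by ring
  have hint_le : ∀ k : ℕ, ∫ t, ‖F k t‖ ∂μ ≤ ek k * ∫ t, g t ∂μ := by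
    intro k
    rw [← integral_const_mul]
    refine integral_mono_ae ((hFk_int k).norm) ((hg_int.const_mul (ek k))) ?_
    exact (ae_restrict_iff' measurableSet_Ioc).2 (ae_of_all _ fun t ht => hnorm_le k t ht)
  -- summability
  have hsummable_rk : Summable (fun k : ℕ =>
      (ascPochhammer ℝ k).eval (‖a‖) / (Nat.factorial k : ℝ) *
        (‖z‖) ^ k) := by
    have habs : ‖((‖z‖ : ℝ) : ℂ)‖ < 1 := by
      rwa [Complex.norm_real, norm_norm]
    have H := (binomial_hasSum ((‖a‖ : ℝ) : ℂ) habs).summable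
    rw [← Complex.summable_ofReal]
    refine H.congr fun k => ?_
    rw [poch_ofReal]
    push_cast
    ring
  have hsummable_ek : Summable ek := by
    refine Summable.of_nonneg_of_le hek_nonneg (fun k => ?_) hsummable_rk
    rw [hek]
    have h3 : (0:ℝ) < (Nat.factorial k : ℝ) := by exact_mod_cast Nat.factorial_pos k
    exact mul_le_mul_of_nonneg_right ((div_le_div_iff_of_pos_right h3).2 (poch_abs_le a k))
      (by positivity)
  have hsummable : Summable (fun k : ℕ => ∫ t, ‖F k t‖ ∂μ) := by
    refine Summable.of_nonneg_of_le (fun k => integral_nonneg fun t => norm_nonneg _)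
      (fun k => hint_le k) (hsummable_ek.mul_right (∫ t, g t ∂μ))
  -- big sum
  have Hbig := hasSum_integral_of_summable_integral_norm hFk_int hsummable
  have htsum_eq : ∫ t, (∑' k, F k t) ∂μ = ∫ t, G t ∂μ := by
    refine integral_congr_ae ?_
    exact (ae_restrict_iff' measurableSet_Ioc).2
      (ae_of_all _ fun t ht => (hsum t ht).tsum_eq)
  rw [htsum_eq, funext hFk_val] at Hbig
  have hG_int_eq : ∫ t, G t ∂μ = ∫ t in (0:ℝ)..1,
      (t : ℂ) ^ (b - 1) * ((1 : ℂ) - (t : ℂ)) ^ (c - b - 1) *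
        ((1 : ℂ) - z * (t : ℂ)) ^ (-a) := by
    rw [intervalIntegral.integral_of_le zero_le_one]
  rw [hG_int_eq] at Hbig
  have Hfin := Hbig.mul_left (Complex.Gamma c / (Complex.Gamma b * Complex.Gamma (c - b)))
  have hterm : ∀ k : ℕ,
      Complex.Gamma c / (Complex.Gamma b * Complex.Gamma (c - b)) *
        (dk k * Complex.betaIntegral (b + k) (c - b)) =
      (Polynomial.eval a (ascPochhammer ℂ k) * Polynomial.eval b (ascPochhammer ℂ k)) /
          (Polynomial.eval c (ascPochhammer ℂ k) * (Nat.factorial k : ℂ)) * z ^ k := by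
    intro k
    have hpc : (ascPochhammer ℂ k).eval c ≠ 0 := poch_ne_zero hc k
    have hΓck : Complex.Gamma (c + k) ≠ 0 := by
      rw [Gamma_add_nat_poch hc k]
      exact mul_ne_zero hpc hΓc
    have hbeta : Complex.betaIntegral (b + k) (c - b) =
        (ascPochhammer ℂ k).eval b * Complex.Gamma b * Complex.Gamma (c - b) /
          ((ascPochhammer ℂ k).eval c * Complex.Gamma c) := by
      have h1 := Complex.Gamma_mul_Gamma_eq_betaIntegral (hbk k) hb'
      rw [show b + (k:ℂ) + (c - b) = c + (k:ℂ) by ring, Gamma_add_nat_poch hc k,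
        Gamma_add_nat_poch hb k] at h1
      rw [eq_div_iff (mul_ne_zero hpc hΓc)]
      linear_combination h1.symm
    have hfac : (Nat.factorial k : ℂ) ≠ 0 := by
      exact_mod_cast Nat.factorial_ne_zero k
    rw [hbeta, hdk]
    field_simp
  rw [funext hterm] at Hfin
  exact Hfin.tsum_eq
end

section
/- Let a, b₁, b₂, c ∈ ℂ with Re c > Re a > 0, and let x, y ∈ ℂ with |x| < 1 and |y| < 1. Then the first Appell hypergeometric series equals the Euler integral: ∑_{k=0}^∞ ∑_{l=0}^∞ ((a)_{k+l} (b₁)_k (b₂)_l)/((c)_{k+l} · k! · l!) · x^k y^l = (Γ(c)/(Γ(a)·Γ(c−a))) · ∫₀¹ t^{a−1} (1−t)^{c−a−1} (1−xt)^{−b₁} (1−yt)^{−b₂} dt, where all powers are principal-branch complex powers and Γ is the complex Gamma function. -/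
open Complex Polynomial Metric MeasureTheory Set
open scoped ENNReal NNReal

lemma appell_aux_term_succ (b z : ℂ) (k : ℕ) :
    Polynomial.eval b (ascPochhammer ℂ (k+1)) * z ^ (k+1) / (Nat.factorial (k+1) : ℂ)
      = (Polynomial.eval b (ascPochhammer ℂ k) * z ^ k / (Nat.factorial k : ℂ)) *
        ((b + k) * z / (k+1)) := by
  rw [ascPochhammer_succ_right, Nat.factorial_succ]
  simp only [Polynomial.eval_mul, Polynomial.eval_add, Polynomial.eval_X,
    Polynomial.eval_natCast]
  have h1 : ((Nat.factorial k : ℂ)) ≠ 0 := Nat.cast_ne_zero.mpr (Nat.factorial_ne_zero k)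
  have h2 : ((k : ℂ) + 1) ≠ 0 := by
    have := Nat.cast_ne_zero (R := ℂ).mpr (Nat.succ_ne_zero k)
    push_cast at this; exact this
  push_cast
  field_simp
  ring

/-- Ratio-test summability of the binomial series (in norm). -/
lemma appell_aux_summable_norm (b : ℂ) {z : ℂ} (hz : ‖z‖ < 1) :
    Summable fun k : ℕ =>
      ‖Polynomial.eval b (ascPochhammer ℂ k) * z ^ k / (Nat.factorial k : ℂ)‖ := by
  set r : ℝ := (1 + ‖z‖) / 2 with hr_def
  have habs : 0 ≤ ‖z‖ := norm_nonneg _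
  have hr1 : r < 1 := by rw [hr_def]; linarith
  have hzr : ‖z‖ < r := by rw [hr_def]; linarith
  have hr0 : 0 < r := by rw [hr_def]; linarith
  apply summable_of_ratio_norm_eventually_le hr1
  obtain ⟨N, hN⟩ := exists_nat_ge (‖b‖ * ‖z‖ / (r - ‖z‖))
  filter_upwards [Filter.eventually_ge_atTop N] with k hk
  have hkN : (‖b‖ * ‖z‖) ≤ k * (r - ‖z‖) := by
    rw [div_le_iff₀ (by linarith)] at hN
    have : (N : ℝ) ≤ k := Nat.cast_le.mpr hk
    nlinarith
  rw [norm_norm, norm_norm, appell_aux_term_succ, norm_mul]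
  have hk1 : ‖((k:ℂ)+1)‖ = (k:ℝ) + 1 := by
    rw [show ((k:ℂ)+1) = ((k+1 : ℕ) : ℂ) by push_cast; ring, Complex.norm_natCast]
    push_cast; ring
  have hratio : ‖(b + (k:ℂ)) * z / ((k:ℂ)+1)‖ ≤ r := by
    rw [norm_div, norm_mul, hk1, div_le_iff₀ (by positivity)]
    have h1 : ‖(b + (k:ℂ))‖ ≤ ‖b‖ + k := by
      have := norm_add_le b ((k:ℂ))
      simpa [Complex.norm_natCast] using this
    have h3 : ‖z‖ = ‖z‖ := rfl
    nlinarith [norm_nonneg z, norm_nonneg (b + (k:ℂ)), norm_nonneg b]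
  calc ‖Polynomial.eval b (ascPochhammer ℂ k) * z ^ k / (Nat.factorial k : ℂ)‖ *
        ‖(b + (k:ℂ)) * z / ((k:ℂ)+1)‖
      ≤ ‖Polynomial.eval b (ascPochhammer ℂ k) * z ^ k / (Nat.factorial k : ℂ)‖ * r :=
        mul_le_mul_of_nonneg_left hratio (norm_nonneg _)
    _ = r * ‖Polynomial.eval b (ascPochhammer ℂ k) * z ^ k / (Nat.factorial k : ℂ)‖ := mul_comm _ _

lemma appell_aux_slit {w : ℂ} (hw : w ∈ ball (0:ℂ) 1) : (1 - w) ∈ Complex.slitPlane := by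
  rw [mem_ball_zero_iff] at hw
  left
  have : w.re ≤ ‖w‖ := Complex.re_le_norm w
  simp only [Complex.sub_re, Complex.one_re]
  have : ‖w‖ = ‖w‖ := rfl
  linarith [Complex.re_le_norm w, hw]

lemma appell_aux_diff (b : ℂ) :
    DifferentiableOn ℂ (fun w : ℂ => (1 - w) ^ (-b)) (ball (0:ℂ) 1) := by
  intro w hw
  exact (((differentiableAt_const (1:ℂ)).sub differentiableAt_id).cpow
    (differentiableAt_const (-b)) (appell_aux_slit hw)).differentiableWithinAt

lemma appell_aux_iteratedDeriv (b : ℂ) (n : ℕ) :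
    Set.EqOn (iteratedDeriv n (fun w : ℂ => (1 - w) ^ (-b)))
      (fun w => Polynomial.eval b (ascPochhammer ℂ n) * (1 - w) ^ (-b - n)) (ball (0:ℂ) 1) := by
  induction n with
  | zero =>
    intro w hw
    simp [iteratedDeriv_zero, ascPochhammer_zero]
  | succ n ih =>
    intro w hw
    rw [iteratedDeriv_succ]
    have hmem : ball (0:ℂ) 1 ∈ nhds w := (isOpen_ball).mem_nhds hw
    have heq : iteratedDeriv n (fun w : ℂ => (1 - w) ^ (-b)) =ᶠ[nhds w]
        (fun w => Polynomial.eval b (ascPochhammer ℂ n) * (1 - w) ^ (-b - n)) :=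
      Filter.eventuallyEq_of_mem hmem ih
    rw [heq.deriv_eq]
    have hd : HasDerivAt (fun w : ℂ => (1 - w) ^ (-b - n))
        ((-b - n) * (1 - w) ^ (-b - n - 1) * (-1)) w :=
      HasDerivAt.cpow_const ((hasDerivAt_id w).const_sub 1) (appell_aux_slit hw)
    rw [((hd.const_mul (Polynomial.eval b (ascPochhammer ℂ n)))).deriv]
    rw [ascPochhammer_succ_right]
    simp only [Polynomial.eval_mul, Polynomial.eval_add, Polynomial.eval_X,
      Polynomial.eval_natCast]
    have hexp : -b - (n:ℂ) - 1 = -b - ((n:ℕ)+1 : ℕ) := by push_cast; ring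
    rw [hexp] at *
    push_cast
    ring

/-- The complex binomial series. -/
lemma appell_aux_hasSum_binomial (b : ℂ) {z : ℂ} (hz : ‖z‖ < 1) :
    HasSum (fun k : ℕ => Polynomial.eval b (ascPochhammer ℂ k) * z ^ k / (Nat.factorial k : ℂ))
      ((1 - z) ^ (-b)) := by
  have hzb : z ∈ ball (0:ℂ) 1 := by rwa [mem_ball_zero_iff]
  have H := Complex.hasSum_taylorSeries_on_ball (appell_aux_diff b) hzb
  have hcoeff : ∀ n : ℕ, iteratedDeriv n (fun w : ℂ => (1 - w) ^ (-b)) 0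
      = Polynomial.eval b (ascPochhammer ℂ n) := by
    intro n
    have := appell_aux_iteratedDeriv b n (mem_ball_self one_pos)
    rw [this]
    simp
  convert H using 2 with n
  · rfl
  rw [hcoeff n]
  simp only [smul_eq_mul, sub_zero]
  field_simp

lemma appell_aux_Gamma_shift {a : ℂ} (ha : 0 < a.re) (n : ℕ) :
    Complex.Gamma (a + n) = Polynomial.eval a (ascPochhammer ℂ n) * Complex.Gamma a := by
  induction n with
  | zero => simp
  | succ n ih =>
    have hne : a + n ≠ 0 := by
      intro h
      have : (a + (n:ℂ)).re = 0 := by rw [h]; simp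
      simp only [Complex.add_re, Complex.natCast_re] at this
      have : (0:ℝ) ≤ n := Nat.cast_nonneg n
      linarith [ha, ‹(a + (n:ℂ)).re = 0›]
    have h1 : a + ((n+1 : ℕ) : ℂ) = (a + n) + 1 := by push_cast; ring
    rw [h1, Complex.Gamma_add_one _ hne, ih, ascPochhammer_succ_right]
    simp only [Polynomial.eval_mul, Polynomial.eval_add, Polynomial.eval_X,
      Polynomial.eval_natCast]
    ring

lemma appell_aux_poch_ne_zero {a : ℂ} (ha : 0 < a.re) (n : ℕ) :
    Polynomial.eval a (ascPochhammer ℂ n) ≠ 0 := by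
  intro h
  have h1 := appell_aux_Gamma_shift ha n
  rw [h, zero_mul] at h1
  exact Complex.Gamma_ne_zero_of_re_pos (by simp [Complex.add_re]; positivity) h1

/-- key scalar identity: `(a)_n / (c)_n = Γ(c)/(Γ(a)Γ(c-a)) * B(a+n, c-a)`. -/
lemma appell_aux_beta_poch (a c : ℂ) (ha : 0 < a.re) (hca : a.re < c.re) (n : ℕ) :
    Complex.Gamma c / (Complex.Gamma a * Complex.Gamma (c - a)) *
      Complex.betaIntegral (a + n) (c - a)
      = Polynomial.eval a (ascPochhammer ℂ n) / Polynomial.eval c (ascPochhammer ℂ n) := by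
  have hc : 0 < c.re := lt_trans ha hca
  have hca' : 0 < (c - a).re := by simp [Complex.sub_re]; linarith
  have han : 0 < (a + n).re := by simp [Complex.add_re]; positivity
  have hbeta := Complex.Gamma_mul_Gamma_eq_betaIntegral han hca'
  have hsum : a + n + (c - a) = c + n := by ring
  rw [hsum] at hbeta
  have hGcn : Complex.Gamma (c + n) ≠ 0 :=
    Complex.Gamma_ne_zero_of_re_pos (by simp [Complex.add_re]; positivity)
  have hGa : Complex.Gamma a ≠ 0 := Complex.Gamma_ne_zero_of_re_pos ha
  have hGc : Complex.Gamma c ≠ 0 := Complex.Gamma_ne_zero_of_re_pos hc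
  have hGca : Complex.Gamma (c - a) ≠ 0 := Complex.Gamma_ne_zero_of_re_pos hca'
  have hpc : Polynomial.eval c (ascPochhammer ℂ n) ≠ 0 := appell_aux_poch_ne_zero hc n
  have hga := appell_aux_Gamma_shift ha n
  have hgc := appell_aux_Gamma_shift hc n
  rw [hga, hgc] at hbeta
  rw [div_mul_eq_mul_div, div_eq_div_iff (mul_ne_zero hGa hGca) hpc]
  linear_combination -hbeta

noncomputable def appellTerm (b x : ℂ) (k : ℕ) : ℂ :=
  Polynomial.eval b (ascPochhammer ℂ k) * x ^ k / (Nat.factorial k : ℂ)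

noncomputable def appellG (a c b₁ b₂ x y : ℂ) (p : ℕ × ℕ) (t : ℝ) : ℂ :=
  (t:ℂ) ^ (a-1) * (1 - (t:ℂ)) ^ (c-a-1) * appellTerm b₁ (x * t) p.1 * appellTerm b₂ (y * t) p.2

section

variable {a b₁ b₂ c x y : ℂ}

lemma appell_abs_mul_mem {x : ℂ} (hx : ‖x‖ < 1) {t : ℝ} (ht : t ∈ Ioo (0:ℝ) 1) :
    ‖x * t‖ < 1 := by
  rw [norm_mul, Complex.norm_real, Real.norm_eq_abs, abs_of_pos ht.1]
  calc ‖x‖ * t ≤ ‖x‖ * 1 :=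
        mul_le_mul_of_nonneg_left ht.2.le (norm_nonneg _)
    _ < 1 := by simpa using hx

/-- pointwise sum of the double series at `t ∈ (0,1)`. -/
lemma appell_hasSum_pointwise (hx : ‖x‖ < 1) (hy : ‖y‖ < 1)
    {t : ℝ} (ht : t ∈ Ioo (0:ℝ) 1) :
    HasSum (fun p : ℕ × ℕ => appellG a c b₁ b₂ x y p t)
      ((t:ℂ) ^ (a-1) * (1 - (t:ℂ)) ^ (c-a-1) *
        ((1 : ℂ) - x * t) ^ (-b₁) * ((1 : ℂ) - y * t) ^ (-b₂)) := by
  have hxt := appell_abs_mul_mem hx ht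
  have hyt := appell_abs_mul_mem hy ht
  have H1 := appell_aux_hasSum_binomial b₁ hxt
  have H2 := appell_aux_hasSum_binomial b₂ hyt
  have hS := summable_mul_of_summable_norm (appell_aux_summable_norm b₁ hxt)
    (appell_aux_summable_norm b₂ hyt)
  have H := (H1.mul H2 hS).mul_left ((t:ℂ) ^ (a-1) * (1 - (t:ℂ)) ^ (c-a-1))
  convert H using 1
  · rfl
  · funext p; simp only [appellG, appellTerm]; ring
  · ring

/-- norm bound uniform in `t`. -/
lemma appell_norm_bound (p : ℕ × ℕ) {t : ℝ} (ht : t ∈ Ioo (0:ℝ) 1) :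
    ‖appellG a c b₁ b₂ x y p t‖ ≤
      ‖appellTerm b₁ x p.1‖ * ‖appellTerm b₂ y p.2‖ *
        ‖(t:ℂ) ^ (a-1) * (1 - (t:ℂ)) ^ (c-a-1)‖ := by
  have key : ∀ (b z : ℂ) (k : ℕ), ‖appellTerm b (z * t) k‖ ≤ ‖appellTerm b z k‖ := by
    intro b z k
    simp only [appellTerm, norm_div, norm_mul, norm_pow]
    have hb : ‖z‖ * ‖(t:ℂ)‖ ≤ ‖z‖ := by
      calc ‖z‖ * ‖(t:ℂ)‖ = ‖z‖ * |t| := by rw [Complex.norm_real, Real.norm_eq_abs]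
        _ ≤ ‖z‖ * 1 := by
            rw [abs_of_pos ht.1]; exact mul_le_mul_of_nonneg_left ht.2.le (norm_nonneg _)
        _ = ‖z‖ := mul_one _
    gcongr
  calc ‖appellG a c b₁ b₂ x y p t‖
      = ‖(t:ℂ) ^ (a-1) * (1 - (t:ℂ)) ^ (c-a-1)‖ * ‖appellTerm b₁ (x * t) p.1‖ *
          ‖appellTerm b₂ (y * t) p.2‖ := by
        simp only [appellG, norm_mul]; try ring
    _ ≤ ‖(t:ℂ) ^ (a-1) * (1 - (t:ℂ)) ^ (c-a-1)‖ * ‖appellTerm b₁ x p.1‖ *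
          ‖appellTerm b₂ y p.2‖ := by
        gcongr <;> first
          | exact key b₁ x p.1
          | exact key b₂ y p.2
    _ = _ := by ring

lemma appell_measurable (p : ℕ × ℕ) :
    AEStronglyMeasurable (appellG a c b₁ b₂ x y p)
      (MeasureTheory.volume.restrict (Ioo (0:ℝ) 1)) := by
  apply ContinuousOn.aestronglyMeasurable _ measurableSet_Ioo
  intro t ht
  apply ContinuousAt.continuousWithinAt
  have h1 : ContinuousAt (fun t : ℝ => ((t:ℂ)) ^ (a-1)) t :=
    ContinuousAt.comp (continuousAt_cpow_const (Or.inl (by simpa using ht.1)))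
      Complex.continuous_ofReal.continuousAt
  have h2 : ContinuousAt (fun t : ℝ => ((1:ℂ) - (t:ℂ)) ^ (c-a-1)) t :=
    ContinuousAt.comp (g := fun w : ℂ => w ^ (c-a-1))
      (continuousAt_cpow_const (Or.inl (by simp; linarith [ht.2])))
      ((continuous_const.sub Complex.continuous_ofReal).continuousAt)
  have h3 : ∀ (b z : ℂ) (k : ℕ), ContinuousAt (fun t : ℝ => appellTerm b (z * t) k) t := by
    intro b z k
    simp only [appellTerm]
    fun_prop
  exact ((h1.mul h2).mul (h3 b₁ x p.1)).mul (h3 b₂ y p.2)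

end

section
variable {a b₁ b₂ c x y : ℂ}

lemma appell_H0_integrable (ha : 0 < a.re) (hca : a.re < c.re) :
    Integrable (fun t : ℝ => (t:ℂ) ^ (a-1) * (1 - (t:ℂ)) ^ (c-a-1))
      (MeasureTheory.volume.restrict (Ioo (0:ℝ) 1)) := by
  have h := Complex.betaIntegral_convergent ha (by simp [Complex.sub_re]; linarith : 0 < (c-a).re)
  rw [intervalIntegrable_iff_integrableOn_Ioc_of_le zero_le_one] at h
  exact h.mono_set Ioo_subset_Ioc_self

lemma appell_lintegral_bound (ha : 0 < a.re) (hca : a.re < c.re)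
    (hx : ‖x‖ < 1) (hy : ‖y‖ < 1) :
    ∑' p : ℕ × ℕ, ∫⁻ t, ‖appellG a c b₁ b₂ x y p t‖₊
        ∂(MeasureTheory.volume.restrict (Ioo (0:ℝ) 1)) ≠ ⊤ := by
  set μ := MeasureTheory.volume.restrict (Ioo (0:ℝ) 1)
  set B : ℝ≥0∞ := ∫⁻ t, ‖(t:ℂ) ^ (a-1) * (1 - (t:ℂ)) ^ (c-a-1)‖₊ ∂μ with hB
  have hBfin : B < ⊤ := (appell_H0_integrable ha hca).2
  set u : ℕ → ℝ := fun k => ‖appellTerm b₁ x k‖ with hu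
  set v : ℕ → ℝ := fun l => ‖appellTerm b₂ y l‖ with hv
  have hus : Summable u := appell_aux_summable_norm b₁ hx
  have hvs : Summable v := appell_aux_summable_norm b₂ hy
  have huv : Summable (fun p : ℕ × ℕ => u p.1 * v p.2) :=
    hus.mul_of_nonneg hvs (fun _ => norm_nonneg _) (fun _ => norm_nonneg _)
  have step : ∀ p : ℕ × ℕ, ∫⁻ t, ‖appellG a c b₁ b₂ x y p t‖₊ ∂μ ≤
      ENNReal.ofReal (u p.1 * v p.2) * B := by
    intro p
    have hb : ∀ᵐ t ∂μ, (‖appellG a c b₁ b₂ x y p t‖₊ : ℝ≥0∞) ≤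
        ENNReal.ofReal (u p.1 * v p.2) * ‖(t:ℂ) ^ (a-1) * (1 - (t:ℂ)) ^ (c-a-1)‖₊ := by
      filter_upwards [ae_restrict_mem measurableSet_Ioo] with t ht
      have := appell_norm_bound (a := a) (c := c) (b₁ := b₁) (b₂ := b₂) (x := x) (y := y) p ht
      calc (‖appellG a c b₁ b₂ x y p t‖₊ : ℝ≥0∞)
          = ENNReal.ofReal ‖appellG a c b₁ b₂ x y p t‖ := (ofReal_norm _).symm
        _ ≤ ENNReal.ofReal (u p.1 * v p.2 * ‖(t:ℂ) ^ (a-1) * (1 - (t:ℂ)) ^ (c-a-1)‖) :=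
            ENNReal.ofReal_le_ofReal this
        _ = ENNReal.ofReal (u p.1 * v p.2) *
              ENNReal.ofReal ‖(t:ℂ) ^ (a-1) * (1 - (t:ℂ)) ^ (c-a-1)‖ := by
            rw [ENNReal.ofReal_mul (by positivity)]
        _ = _ := by rw [ofReal_norm, enorm_eq_nnnorm]
    calc ∫⁻ t, ‖appellG a c b₁ b₂ x y p t‖₊ ∂μ
        ≤ ∫⁻ t, ENNReal.ofReal (u p.1 * v p.2) *
            ‖(t:ℂ) ^ (a-1) * (1 - (t:ℂ)) ^ (c-a-1)‖₊ ∂μ := lintegral_mono_ae hb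
      _ = ENNReal.ofReal (u p.1 * v p.2) * B :=
          lintegral_const_mul' _ _ ENNReal.ofReal_ne_top
  have : ∑' p : ℕ × ℕ, ∫⁻ t, ‖appellG a c b₁ b₂ x y p t‖₊ ∂μ < ⊤ := by
    calc ∑' p : ℕ × ℕ, ∫⁻ t, ‖appellG a c b₁ b₂ x y p t‖₊ ∂μ
        ≤ ∑' p : ℕ × ℕ, ENNReal.ofReal (u p.1 * v p.2) * B := ENNReal.tsum_le_tsum step
      _ = (∑' p : ℕ × ℕ, ENNReal.ofReal (u p.1 * v p.2)) * B := ENNReal.tsum_mul_right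
      _ < ⊤ := by
          apply ENNReal.mul_lt_top _ hBfin
          rw [← ENNReal.ofReal_tsum_of_nonneg (fun p => by positivity) huv]
          exact ENNReal.ofReal_lt_top
  exact this.ne

end

section
variable {a b₁ b₂ c x y : ℂ}

lemma appell_integral_g (p : ℕ × ℕ) :
    ∫ t in Ioo (0:ℝ) 1, appellG a c b₁ b₂ x y p t =
      appellTerm b₁ x p.1 * appellTerm b₂ y p.2 *
        Complex.betaIntegral (a + ((p.1 + p.2 : ℕ) : ℂ)) (c - a) := by
  have h1 : Complex.betaIntegral (a + ((p.1 + p.2 : ℕ) : ℂ)) (c - a)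
      = ∫ t in Ioo (0:ℝ) 1,
          (t:ℂ) ^ (a + ((p.1 + p.2 : ℕ) : ℂ) - 1) * (1 - (t:ℂ)) ^ (c - a - 1) := by
    rw [Complex.betaIntegral, intervalIntegral.integral_of_le zero_le_one,
      MeasureTheory.integral_Ioc_eq_integral_Ioo]
  rw [h1, ← MeasureTheory.integral_const_mul]
  apply setIntegral_congr_fun measurableSet_Ioo
  intro t ht
  have ht0 : (t:ℂ) ≠ 0 := by exact_mod_cast ne_of_gt ht.1
  simp only [appellG, appellTerm]
  have hpow : (t:ℂ) ^ (a + ((p.1 + p.2 : ℕ) : ℂ) - 1)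
      = (t:ℂ) ^ (a - 1) * (t:ℂ) ^ p.1 * (t:ℂ) ^ p.2 := by
    rw [← Complex.cpow_natCast (t:ℂ) p.1, ← Complex.cpow_natCast (t:ℂ) p.2,
      ← Complex.cpow_add _ _ ht0, ← Complex.cpow_add _ _ ht0]
    congr 1
    push_cast
    ring
  rw [hpow, mul_pow, mul_pow]
  ring

lemma appell_summable_integrals (ha : 0 < a.re) (hca : a.re < c.re)
    (hx : ‖x‖ < 1) (hy : ‖y‖ < 1) :
    Summable (fun p : ℕ × ℕ =>
      ∫ t in Ioo (0:ℝ) 1, appellG a c b₁ b₂ x y p t) := by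
  set μ := MeasureTheory.volume.restrict (Ioo (0:ℝ) 1)
  set CB : ℝ := ∫ t, ‖(t:ℂ) ^ (a-1) * (1 - (t:ℂ)) ^ (c-a-1)‖ ∂μ with hCB
  apply Summable.of_norm_bounded
    (g := fun p : ℕ × ℕ => ‖appellTerm b₁ x p.1‖ * ‖appellTerm b₂ y p.2‖ * CB)
  · exact ((appell_aux_summable_norm b₁ hx).mul_of_nonneg
      (appell_aux_summable_norm b₂ hy) (fun _ => norm_nonneg _)
        (fun _ => norm_nonneg _)).mul_right CB
  · intro p
    have hbd : ∀ᵐ t ∂μ, ‖appellG a c b₁ b₂ x y p t‖ ≤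
        ‖appellTerm b₁ x p.1‖ * ‖appellTerm b₂ y p.2‖ *
          ‖(t:ℂ) ^ (a-1) * (1 - (t:ℂ)) ^ (c-a-1)‖ := by
      filter_upwards [ae_restrict_mem measurableSet_Ioo] with t ht
      exact appell_norm_bound p ht
    have hint : Integrable (fun t : ℝ => ‖appellTerm b₁ x p.1‖ * ‖appellTerm b₂ y p.2‖ *
        ‖(t:ℂ) ^ (a-1) * (1 - (t:ℂ)) ^ (c-a-1)‖) μ :=
      ((appell_H0_integrable ha hca).norm.const_mul _)
    calc ‖∫ t, appellG a c b₁ b₂ x y p t ∂μ‖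
        ≤ ∫ t, ‖appellTerm b₁ x p.1‖ * ‖appellTerm b₂ y p.2‖ *
            ‖(t:ℂ) ^ (a-1) * (1 - (t:ℂ)) ^ (c-a-1)‖ ∂μ :=
          norm_integral_le_of_norm_le hint hbd
      _ = ‖appellTerm b₁ x p.1‖ * ‖appellTerm b₂ y p.2‖ * CB :=
          MeasureTheory.integral_const_mul _ _

end

/-- Euler integral representation of the first Appell hypergeometric function:
for `Re c > Re a > 0`, `|x| < 1`, `|y| < 1`,
`F₁(a,b₁,b₂;c;x,y) = Γ(c)/(Γ(a)Γ(c-a)) ∫₀¹ t^(a-1)(1-t)^(c-a-1)(1-xt)^(-b₁)(1-yt)^(-b₂) dt`. -/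
theorem appellF1_euler_integral
    (a b₁ b₂ c : ℂ) (ha : 0 < a.re) (hca : a.re < c.re)
    (x y : ℂ) (hx : ‖x‖ < 1) (hy : ‖y‖ < 1) :
    ∑' k : ℕ, ∑' l : ℕ,
        (Polynomial.eval a (ascPochhammer ℂ (k + l)) *
            Polynomial.eval b₁ (ascPochhammer ℂ k) *
            Polynomial.eval b₂ (ascPochhammer ℂ l)) /
          (Polynomial.eval c (ascPochhammer ℂ (k + l)) *
            (Nat.factorial k : ℂ) * (Nat.factorial l : ℂ)) * x ^ k * y ^ l =
      Complex.Gamma c / (Complex.Gamma a * Complex.Gamma (c - a)) *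
        ∫ t in (0:ℝ)..1,
          (t : ℂ) ^ (a - 1) * ((1 : ℂ) - (t : ℂ)) ^ (c - a - 1) *
            ((1 : ℂ) - x * (t : ℂ)) ^ (-b₁) * ((1 : ℂ) - y * (t : ℂ)) ^ (-b₂) := by
  set K := Complex.Gamma c / (Complex.Gamma a * Complex.Gamma (c - a)) with hK
  have hF : ∀ k l : ℕ,
      (Polynomial.eval a (ascPochhammer ℂ (k + l)) *
            Polynomial.eval b₁ (ascPochhammer ℂ k) *
            Polynomial.eval b₂ (ascPochhammer ℂ l)) /
          (Polynomial.eval c (ascPochhammer ℂ (k + l)) *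
            (Nat.factorial k : ℂ) * (Nat.factorial l : ℂ)) * x ^ k * y ^ l
        = K * ∫ t in Ioo (0:ℝ) 1, appellG a c b₁ b₂ x y (k, l) t := by
    intro k l
    rw [appell_integral_g (k, l)]
    have hb := appell_aux_beta_poch a c ha hca (k + l)
    have hre : K * (appellTerm b₁ x (k, l).1 * appellTerm b₂ y (k, l).2 *
        Complex.betaIntegral (a + (((k, l).1 + (k, l).2 : ℕ) : ℂ)) (c - a))
        = (K * Complex.betaIntegral (a + ((k + l : ℕ) : ℂ)) (c - a)) *
          appellTerm b₁ x k * appellTerm b₂ y l := by ring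
    rw [hre, hb]
    simp only [appellTerm]
    ring
  have hsum : Summable (fun p : ℕ × ℕ => K * ∫ t in Ioo (0:ℝ) 1, appellG a c b₁ b₂ x y p t) :=
    (appell_summable_integrals ha hca hx hy).mul_left K
  calc ∑' k : ℕ, ∑' l : ℕ,
        (Polynomial.eval a (ascPochhammer ℂ (k + l)) *
            Polynomial.eval b₁ (ascPochhammer ℂ k) *
            Polynomial.eval b₂ (ascPochhammer ℂ l)) /
          (Polynomial.eval c (ascPochhammer ℂ (k + l)) *
            (Nat.factorial k : ℂ) * (Nat.factorial l : ℂ)) * x ^ k * y ^ l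
      = ∑' k : ℕ, ∑' l : ℕ, K * ∫ t in Ioo (0:ℝ) 1, appellG a c b₁ b₂ x y (k, l) t :=
        tsum_congr fun k => tsum_congr fun l => hF k l
    _ = ∑' p : ℕ × ℕ, K * ∫ t in Ioo (0:ℝ) 1, appellG a c b₁ b₂ x y p t :=
        (Summable.tsum_prod' hsum fun k => hsum.prod_factor k).symm
    _ = K * ∑' p : ℕ × ℕ, ∫ t in Ioo (0:ℝ) 1, appellG a c b₁ b₂ x y p t := tsum_mul_left
    _ = K * ∫ t in Ioo (0:ℝ) 1, ∑' p : ℕ × ℕ, appellG a c b₁ b₂ x y p t := by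
        rw [MeasureTheory.integral_tsum (fun p => appell_measurable p)
          (appell_lintegral_bound ha hca hx hy)]
    _ = K * ∫ t in Ioo (0:ℝ) 1,
          (t : ℂ) ^ (a - 1) * ((1 : ℂ) - (t : ℂ)) ^ (c - a - 1) *
            ((1 : ℂ) - x * (t : ℂ)) ^ (-b₁) * ((1 : ℂ) - y * (t : ℂ)) ^ (-b₂) := by
        congr 1
        apply setIntegral_congr_fun measurableSet_Ioo
        intro t ht
        exact (appell_hasSum_pointwise hx hy ht).tsum_eq
    _ = K * ∫ t in (0:ℝ)..1,
          (t : ℂ) ^ (a - 1) * ((1 : ℂ) - (t : ℂ)) ^ (c - a - 1) *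
            ((1 : ℂ) - x * (t : ℂ)) ^ (-b₁) * ((1 : ℂ) - y * (t : ℂ)) ^ (-b₂) := by
        rw [intervalIntegral.integral_of_le zero_le_one,
          MeasureTheory.integral_Ioc_eq_integral_Ioo]
end

section
/- Let n ≥ 1 be a natural number and z ∈ ℂ with |z| < 1. Then ∫₀¹ z·(1 − (zt)^n)^{−(n+2)/n} dt = ∑_{k=0}^∞ ((1+2/n)_k (1/n)_k)/((1+1/n)_k · k!) · z^{nk+1}, where (1 − (zt)^n)^{−(n+2)/n} is the principal-branch complex power. In other words, the analytic part of the harmonic shear of the polygonal mapping φ(z) = ∫₀^z (1−ζ^n)^{−2/n} dζ with dilatation ω(z) = z^n is h(z) = z·F(1+2/n, 1/n; 1+1/n; z^n). -/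
open Filter Polynomial Topology

noncomputable def bc (s : ℝ) (k : ℕ) : ℝ := (ascPochhammer ℝ k).eval s / k.factorial

lemma bc_zero (s : ℝ) : bc s 0 = 1 := by simp [bc]

lemma bc_pos {s : ℝ} (hs : 0 < s) (k : ℕ) : 0 < bc s k :=
  div_pos (ascPochhammer_pos k s hs) (by positivity)

lemma bc_succ (s : ℝ) (k : ℕ) : bc s (k + 1) = bc s k * ((s + k) / (k + 1)) := by
  have h : (k.factorial : ℝ) ≠ 0 := by positivity
  rw [bc, bc, ascPochhammer_succ_eval, Nat.factorial_succ, Nat.cast_mul, div_mul_div_comm]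
  congr 1
  push_cast
  ring

lemma tendsto_aux (a : ℝ) : Tendsto (fun k : ℕ => (a + k) / (1 + k)) atTop (𝓝 1) := by
  have h1 : Tendsto (fun k : ℕ => (1 : ℝ) + k) atTop atTop :=
    tendsto_atTop_add_const_left _ _ tendsto_natCast_atTop_atTop
  have h2 : Tendsto (fun k : ℕ => (a - 1) * (1 + (k : ℝ))⁻¹) atTop (𝓝 ((a - 1) * 0)) :=
    (tendsto_inv_atTop_zero.comp h1).const_mul _
  have h3 : Tendsto (fun k : ℕ => 1 + (a - 1) * (1 + (k : ℝ))⁻¹) atTop (𝓝 (1 + (a - 1) * 0)) :=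
    h2.const_add 1
  simp only [mul_zero, add_zero] at h3
  refine h3.congr' ?_
  filter_upwards [eventually_gt_atTop 0] with k _
  have hk : (1 : ℝ) + k ≠ 0 := by positivity
  field_simp
  ring

lemma summable_main {s : ℝ} (hs : 0 < s) (a : ℝ) (ha : 0 < a) {r : ℝ} (hr0 : 0 ≤ r)
    (hr : r < 1) : Summable (fun k : ℕ => bc s k * (a + k) * r ^ k) := by
  rcases eq_or_lt_of_le hr0 with h0 | h0
  · apply summable_of_ne_finset_zero (s := {0})
    intro k hk
    simp only [Finset.mem_singleton] at hk
    simp [← h0, zero_pow hk]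
  · apply summable_of_ratio_test_tendsto_lt_one hr
    · filter_upwards with k
      have h1 := bc_pos hs k
      have h2 : (0:ℝ) < a + k := by positivity
      exact ne_of_gt (mul_pos (mul_pos h1 h2) (pow_pos h0 _))
    · have key : ∀ k : ℕ, ((s + k) / (1 + k)) * ((a + ((k:ℝ)+1)) / (a + k)) * r
          = ‖bc s (k+1) * (a + ((k+1:ℕ):ℝ)) * r ^ (k+1)‖ / ‖bc s k * (a + (k:ℝ)) * r ^ k‖ := by
        intro k
        have h1 := bc_pos hs k
        have h1' := bc_pos hs (k+1)
        have h2 : (0:ℝ) < a + k := by positivity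
        have h3 : (0:ℝ) < a + ((k+1:ℕ):ℝ) := by push_cast; positivity
        have h4 : (0:ℝ) < s + k := by positivity
        have h5 : (0:ℝ) < (1:ℝ) + k := by positivity
        rw [Real.norm_eq_abs, Real.norm_eq_abs,
          abs_of_pos (mul_pos (mul_pos h1' h3) (pow_pos h0 _)),
          abs_of_pos (mul_pos (mul_pos h1 h2) (pow_pos h0 _)),
          bc_succ, pow_succ]
        push_cast
        field_simp
        ring
      have hA : Tendsto (fun k : ℕ => (s + k) / (1 + k)) atTop (𝓝 1) := tendsto_aux s
      have hB : Tendsto (fun k : ℕ => (a + ((k:ℝ)+1)) / (a + k)) atTop (𝓝 1) := by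
        have h := (tendsto_aux (a + 1)).div (tendsto_aux a) one_ne_zero
        rw [div_one] at h
        refine h.congr fun k => ?_
        have h5 : (1:ℝ) + k ≠ 0 := by positivity
        have h2 : a + (k:ℝ) ≠ 0 := by positivity
        simp only [Pi.div_apply]
        field_simp
        ring
      have h := (hA.mul hB).mul_const r
      rw [one_mul, one_mul] at h
      exact h.congr key

lemma bc_succ' (s : ℝ) (k : ℕ) : bc s (k + 1) * (k + 1) = bc s k * (s + k) := by
  have h : ((k:ℝ) + 1) ≠ 0 := by positivity
  rw [bc_succ]
  field_simp

lemma summable_cw {s : ℝ} (hs : 0 < s) {w : ℂ} (hw : ‖w‖ < 1) :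
    Summable (fun k : ℕ => ((bc s k : ℝ) : ℂ) * w ^ k) := by
  apply Summable.of_norm
  have key : ∀ k : ℕ, ‖((bc s k : ℝ) : ℂ) * w ^ k‖ = bc s k * ‖w‖ ^ k := by
    intro k
    rw [norm_mul, norm_pow, Complex.norm_real, Real.norm_eq_abs,
      abs_of_pos (bc_pos hs k)]
  rw [funext key]
  refine Summable.of_nonneg_of_le
    (fun k => mul_nonneg (bc_pos hs k).le (by positivity))
    (fun k => ?_) (summable_main hs 1 one_pos (norm_nonneg w) hw)
  have h1 := (bc_pos hs k).le
  have h2 : (1:ℝ) ≤ 1 + k := by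
    have : (0:ℝ) ≤ k := Nat.cast_nonneg k
    linarith
  have h3 : (0:ℝ) ≤ ‖w‖ ^ k := by positivity
  nlinarith [mul_nonneg h1 h3]

lemma summable_dw {s : ℝ} (hs : 0 < s) {r : ℝ} (hr0 : 0 ≤ r) (hr : r < 1) :
    Summable (fun k : ℕ => bc s k * (k * r ^ (k - 1))) := by
  rw [← summable_nat_add_iff 1]
  have key : (fun k : ℕ => bc s (k + 1) * ((k + 1 : ℕ) * r ^ (k + 1 - 1)))
      = fun k : ℕ => bc s k * (s + k) * r ^ k := by
    funext k
    have : k + 1 - 1 = k := rfl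
    rw [this]
    push_cast
    rw [← mul_assoc, bc_succ' s k]
  rw [key]
  exact summable_main hs s hs hr0 hr

lemma summable_dw' {s : ℝ} (hs : 0 < s) {w : ℂ} (hw : ‖w‖ < 1) :
    Summable (fun k : ℕ => ((bc s k : ℝ) : ℂ) * ((k : ℂ) * w ^ (k - 1))) := by
  apply Summable.of_norm
  have key : ∀ k : ℕ, ‖((bc s k : ℝ) : ℂ) * ((k : ℂ) * w ^ (k - 1))‖
      = bc s k * (k * ‖w‖ ^ (k - 1)) := by
    intro k
    rw [norm_mul, norm_mul, norm_pow, Complex.norm_real, Complex.norm_natCast,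
      Real.norm_eq_abs, abs_of_pos (bc_pos hs k)]
  rw [funext key]
  exact summable_dw hs (norm_nonneg w) hw

noncomputable def bg (s : ℝ) : ℂ → ℂ := fun w => ∑' k : ℕ, ((bc s k : ℝ) : ℂ) * w ^ k

lemma bg_hasDerivAt {s : ℝ} (hs : 0 < s) {w : ℂ} (hw : ‖w‖ < 1) :
    HasDerivAt (bg s) (∑' k : ℕ, ((bc s k : ℝ) : ℂ) * ((k : ℂ) * w ^ (k - 1))) w := by
  set r : ℝ := (‖w‖ + 1) / 2 with hrdef
  have hwr : ‖w‖ < r := by rw [hrdef]; linarith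
  have hr1 : r < 1 := by rw [hrdef]; linarith
  have hr0 : (0:ℝ) < r := lt_of_le_of_lt (norm_nonneg w) hwr
  apply hasDerivAt_tsum_of_isPreconnected (u := fun k => bc s k * (k * r ^ (k - 1)))
    (summable_dw hs hr0.le hr1) Metric.isOpen_ball (convex_ball (0:ℂ) r).isPreconnected
    (fun k y _ => (hasDerivAt_pow k y).const_mul ((bc s k : ℝ) : ℂ))
    ?_ (Metric.mem_ball_self hr0) ?_ ?_
  · intro k y hy
    rw [mem_ball_zero_iff] at hy
    show ‖((bc s k : ℝ) : ℂ) * ((k : ℂ) * y ^ (k - 1))‖ ≤ bc s k * (k * r ^ (k - 1))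
    have he : ‖((bc s k : ℝ) : ℂ) * ((k : ℂ) * y ^ (k - 1))‖
        = bc s k * (k * ‖y‖ ^ (k - 1)) := by
      rw [norm_mul, norm_mul, norm_pow, Complex.norm_real, Complex.norm_natCast,
        Real.norm_eq_abs, abs_of_pos (bc_pos hs k)]
    rw [he]
    refine mul_le_mul_of_nonneg_left ?_ (bc_pos hs k).le
    exact mul_le_mul_of_nonneg_left
      (pow_le_pow_left₀ (norm_nonneg y) hy.le _) (Nat.cast_nonneg k)
  · exact summable_cw hs (w := 0) (by simp)
  · rw [mem_ball_zero_iff]; exact hwr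

lemma bg_ode {s : ℝ} (hs : 0 < s) {w : ℂ} (hw : ‖w‖ < 1) :
    (1 - w) * (∑' k : ℕ, ((bc s k : ℝ) : ℂ) * ((k : ℂ) * w ^ (k - 1))) = s * bg s w := by
  set f : ℕ → ℂ := fun k => ((bc s k : ℝ) : ℂ) * ((k : ℂ) * w ^ (k - 1)) with hf
  set D := ∑' k, f k with hDdef
  have hDsum : HasSum f D := (summable_dw' hs hw).hasSum
  have hshift : HasSum (fun k => f (k + 1)) D := by
    have h0 : ∑ i ∈ Finset.range 1, f i = 0 := by simp [hf]
    have h := (hasSum_nat_add_iff' 1).mpr hDsum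
    rwa [h0, sub_zero] at h
  have hA : HasSum (fun k => ((bc s k : ℝ) : ℂ) * ((s : ℂ) + k) * w ^ k) D := by
    have hfe : (fun k => f (k + 1))
        = fun k => ((bc s k : ℝ) : ℂ) * ((s : ℂ) + k) * w ^ k := by
      funext k
      have h1 : f (k + 1) = (((bc s (k + 1) * (k + 1) : ℝ)) : ℂ) * w ^ k := by
        simp only [hf]
        have : k + 1 - 1 = k := rfl
        rw [this]
        push_cast
        ring
      rw [h1, bc_succ']
      push_cast
      ring
    rwa [hfe] at hshift
  have hW : HasSum (fun k => ((bc s k : ℝ) : ℂ) * (k : ℂ) * w ^ k) (D * w) := by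
    have h := hDsum.mul_right w
    have hfe : (fun k => f k * w)
        = fun k => ((bc s k : ℝ) : ℂ) * (k : ℂ) * w ^ k := by
      funext k
      cases k with
      | zero => simp [hf]
      | succ m =>
        simp only [hf]
        have : m + 1 - 1 = m := rfl
        rw [this]
        push_cast
        ring
    rwa [hfe] at h
  have hsub := hA.sub hW
  have hfe2 : (fun k => ((bc s k : ℝ) : ℂ) * ((s : ℂ) + k) * w ^ k
      - ((bc s k : ℝ) : ℂ) * (k : ℂ) * w ^ k)
      = fun k => (s : ℂ) * (((bc s k : ℝ) : ℂ) * w ^ k) := by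
    funext k; ring
  rw [hfe2] at hsub
  have hG : HasSum (fun k => ((bc s k : ℝ) : ℂ) * w ^ k) (bg s w) :=
    (summable_cw hs hw).hasSum
  have huniq := hsub.unique (hG.mul_left (s : ℂ))
  calc (1 - w) * D = D - D * w := by ring
  _ = _ := huniq

lemma bg_mul_cpow {s : ℝ} (hs : 0 < s) {w : ℂ} (hw : ‖w‖ < 1) :
    bg s w * (1 - w) ^ (s : ℂ) = 1 := by
  have key : ∀ y ∈ Metric.ball (0:ℂ) 1,
      HasDerivAt (fun x => bg s x * (1 - x) ^ (s : ℂ)) 0 y := by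
    intro y hy
    rw [mem_ball_zero_iff] at hy
    have h1y : (1 : ℂ) - y ≠ 0 := by
      intro h
      have hy1 : y = 1 := by linear_combination -h
      rw [hy1] at hy
      simp at hy
    have hslit : (1 : ℂ) - y ∈ Complex.slitPlane := by
      refine Complex.mem_slitPlane_iff.mpr (Or.inl ?_)
      have hre : (1 - y).re = 1 - y.re := by simp
      have hale : y.re ≤ ‖y‖ := Complex.re_le_norm y
      have : ‖y‖ < 1 := hy
      rw [hre]
      linarith
    have hgd := bg_hasDerivAt hs hy
    have hid : HasDerivAt (fun x : ℂ => 1 - x) (-1) y := (hasDerivAt_id y).const_sub 1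
    have hcp := hid.cpow_const (c := (s : ℂ)) hslit
    have hmul := hgd.mul hcp
    have hode := bg_ode hs hy
    have hsplit : (1 - y) ^ (s : ℂ) = (1 - y) ^ ((s : ℂ) - 1) * (1 - y) := by
      have h := Complex.cpow_add ((s : ℂ) - 1) 1 h1y
      rw [Complex.cpow_one, sub_add_cancel] at h
      exact h
    refine hmul.congr_deriv ?_
    rw [hsplit]
    linear_combination ((1 - y) ^ ((s : ℂ) - 1)) * hode
  have h0mem : (0:ℂ) ∈ Metric.ball (0:ℂ) 1 := Metric.mem_ball_self one_pos
  have hwmem : w ∈ Metric.ball (0:ℂ) 1 := by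
    rw [mem_ball_zero_iff]; exact hw
  have hdiff : DifferentiableOn ℂ (fun x => bg s x * (1 - x) ^ (s : ℂ))
      (Metric.ball (0:ℂ) 1) :=
    fun x hx => ((key x hx).differentiableAt).differentiableWithinAt
  have hzero : ∀ x ∈ Metric.ball (0:ℂ) 1,
      fderivWithin ℂ (fun x => bg s x * (1 - x) ^ (s : ℂ)) (Metric.ball (0:ℂ) 1) x = 0 := by
    intro x hx
    rw [(key x hx).differentiableAt.fderivWithin (Metric.isOpen_ball.uniqueDiffWithinAt hx),
      ((key x hx).hasFDerivAt).fderiv]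
    ext v
    simp
  have heq := (convex_ball (0:ℂ) 1).is_const_of_fderivWithin_eq_zero hdiff hzero hwmem h0mem
  have hbg0 : bg s 0 = 1 := by
    rw [show bg s 0 = ∑' k : ℕ, ((bc s k : ℝ) : ℂ) * 0 ^ k from rfl,
      tsum_eq_single 0 (fun k hk => by simp [zero_pow hk])]
    simp [bc_zero]
  rw [heq, hbg0]
  simp

lemma hasSum_binomial {s : ℝ} (hs : 0 < s) {w : ℂ} (hw : ‖w‖ < 1) :
    HasSum (fun k : ℕ => ((bc s k : ℝ) : ℂ) * w ^ k) ((1 - w) ^ (-(s : ℂ))) := by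
  have hG : HasSum (fun k : ℕ => ((bc s k : ℝ) : ℂ) * w ^ k) (bg s w) :=
    (summable_cw hs hw).hasSum
  have hval : bg s w = (1 - w) ^ (-(s : ℂ)) := by
    rw [Complex.cpow_neg]
    exact eq_inv_of_mul_eq_one_left (bg_mul_cpow hs hw)
  rwa [hval] at hG

lemma summable_bcr {s : ℝ} (hs : 0 < s) {r : ℝ} (hr0 : 0 ≤ r) (hr : r < 1) :
    Summable (fun k : ℕ => bc s k * r ^ k) := by
  refine Summable.of_nonneg_of_le
    (fun k => mul_nonneg (bc_pos hs k).le (pow_nonneg hr0 k))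
    (fun k => ?_) (summable_main hs 1 one_pos hr0 hr)
  have h1 := (bc_pos hs k).le
  have h2 : (1:ℝ) ≤ 1 + k := by
    have : (0:ℝ) ≤ k := Nat.cast_nonneg k
    linarith
  have h3 : (0:ℝ) ≤ r ^ k := pow_nonneg hr0 k
  nlinarith [mul_nonneg h1 h3]

lemma eval_ascPochhammer_cast (x : ℝ) (k : ℕ) :
    Polynomial.eval ((x : ℂ)) (ascPochhammer ℂ k)
      = ((Polynomial.eval x (ascPochhammer ℝ k) : ℝ) : ℂ) := by
  rw [← ascPochhammer_map (algebraMap ℝ ℂ) k, Polynomial.eval_map,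
    show ((x : ℂ)) = algebraMap ℝ ℂ x from rfl, Polynomial.eval₂_hom]
  rfl

lemma eval_ascPochhammer_ratio (n : ℕ) (hn : 1 ≤ n) (k : ℕ) :
    Polynomial.eval (1 / (n : ℂ)) (ascPochhammer ℂ k) * ((n * k + 1 : ℕ) : ℂ)
      = Polynomial.eval (1 + 1 / (n : ℂ)) (ascPochhammer ℂ k) := by
  have hn0 : (n : ℂ) ≠ 0 := Nat.cast_ne_zero.mpr (by omega)
  induction k with
  | zero => simp
  | succ m ih =>
    rw [ascPochhammer_succ_eval, ascPochhammer_succ_eval, ← ih]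
    push_cast
    field_simp
    ring

lemma eval_ascPochhammer_ne_zero (n : ℕ) (hn : 1 ≤ n) (k : ℕ) :
    Polynomial.eval (1 / (n : ℂ)) (ascPochhammer ℂ k) ≠ 0 := by
  have hpos : (0:ℝ) < 1 / (n : ℝ) := by
    have : (0:ℝ) < n := by exact_mod_cast hn
    positivity
  have h := ascPochhammer_pos k (1 / (n : ℝ)) hpos
  have hc : Polynomial.eval (1 / (n : ℂ)) (ascPochhammer ℂ k)
      = ((Polynomial.eval (1 / (n : ℝ)) (ascPochhammer ℝ k) : ℝ) : ℂ) := by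
    rw [← eval_ascPochhammer_cast]
    push_cast
    ring_nf
  rw [hc]
  exact_mod_cast h.ne'

/-- The analytic part of the harmonic shear of the regular `n`-gon mapping
`φ(z) = ∫₀^z (1-ζ^n)^(-2/n) dζ` with dilatation `ω(z) = z^n` is
`h(z) = z·F(1+2/n, 1/n; 1+1/n; z^n)`. -/
theorem polygon_shear_analytic_part
    (n : ℕ) (hn : 1 ≤ n) (z : ℂ) (hz : ‖z‖ < 1) :
    (∫ t in (0:ℝ)..1,
        z * ((1 : ℂ) - (z * (t : ℂ)) ^ n) ^ (-(((n : ℂ) + 2) / (n : ℂ)))) =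
      ∑' k : ℕ,
        (Polynomial.eval (1 + 2 / (n : ℂ)) (ascPochhammer ℂ k) *
            Polynomial.eval (1 / (n : ℂ)) (ascPochhammer ℂ k)) /
          (Polynomial.eval (1 + 1 / (n : ℂ)) (ascPochhammer ℂ k) *
            (Nat.factorial k : ℂ)) * z ^ (n * k + 1) := by
  have hn0 : (n : ℝ) ≠ 0 := Nat.cast_ne_zero.mpr (by omega)
  have hn0c : (n : ℂ) ≠ 0 := Nat.cast_ne_zero.mpr (by omega)
  set s : ℝ := ((n:ℝ) + 2) / n with hsdef
  have hs : 0 < s := by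
    have h1 : (0:ℝ) < n := by exact_mod_cast hn
    rw [hsdef]; positivity
  have hsc : ((s : ℝ) : ℂ) = ((n : ℂ) + 2) / (n : ℂ) := by
    rw [hsdef]; push_cast; ring
  have hzn : ‖z‖ < 1 := hz
  have hz1 : ‖z‖ ^ n < 1 := pow_lt_one₀ (norm_nonneg z) hzn (by omega)
  have hzt : ∀ t : ℝ, t ∈ Set.Ioc (0:ℝ) 1 → ‖(z * (t:ℂ)) ^ n‖ < 1 := by
    intro t ht
    rw [norm_pow]
    refine pow_lt_one₀ (norm_nonneg _) ?_ (by omega)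
    rw [norm_mul, Complex.norm_real, Real.norm_eq_abs, abs_of_pos ht.1]
    calc ‖z‖ * t ≤ ‖z‖ * 1 := mul_le_mul_of_nonneg_left ht.2 (norm_nonneg z)
    _ < 1 := by rwa [mul_one]
  set F : ℕ → ℝ → ℂ := fun k t => z * ((bc s k : ℝ) : ℂ) * (z * (t:ℂ)) ^ (n * k) with hF
  have hpt : ∀ t ∈ Set.Ioc (0:ℝ) 1,
      HasSum (fun k => F k t) (z * (1 - (z * (t:ℂ)) ^ n) ^ (-(s:ℂ))) := by
    intro t ht
    have h := (hasSum_binomial hs (hzt t ht)).mul_left z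
    have he : (fun k => z * (((bc s k : ℝ):ℂ) * ((z * (t:ℂ)) ^ n) ^ k))
        = fun k => F k t := by
      funext k
      simp only [hF, ← pow_mul]
      ring
    rwa [he] at h
  have hcont : ∀ k, Continuous (F k) := by
    intro k
    simp only [hF]
    fun_prop
  have hFint : ∀ k, MeasureTheory.Integrable (F k)
      (MeasureTheory.volume.restrict (Set.Ioc (0:ℝ) 1)) := fun k =>
    ((hcont k).integrableOn_Ioc)
  have hbound : ∀ k, (∫ t in Set.Ioc (0:ℝ) 1, ‖F k t‖) ≤ bc s k * (‖z‖ ^ n) ^ k := by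
    intro k
    have hpm : (‖z‖ ^ n) ^ k = ‖z‖ ^ (n * k) := (pow_mul ‖z‖ n k).symm
    have hle : ∀ t ∈ Set.Ioc (0:ℝ) 1, ‖F k t‖ ≤ bc s k * (‖z‖ ^ n) ^ k := by
      intro t ht
      have hnorm : ‖F k t‖ = ‖z‖ * bc s k * (‖z‖ * t) ^ (n * k) := by
        simp only [hF]
        rw [norm_mul, norm_mul, norm_pow, norm_mul, Complex.norm_real, Complex.norm_real,
          Real.norm_eq_abs, Real.norm_eq_abs, abs_of_pos (bc_pos hs k), abs_of_pos ht.1]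
      rw [hnorm, hpm]
      have h1 : (‖z‖ * t) ^ (n * k) ≤ ‖z‖ ^ (n * k) := by
        refine pow_le_pow_left₀ (mul_nonneg (norm_nonneg z) ht.1.le) ?_ _
        nlinarith [norm_nonneg z, ht.2, ht.1.le]
      have h2 : (0:ℝ) ≤ bc s k := (bc_pos hs k).le
      have h3 : ‖z‖ ≤ 1 := hzn.le
      have h4 : (0:ℝ) ≤ ‖z‖ ^ (n * k) := by positivity
      have h5 : (0:ℝ) ≤ (‖z‖ * t) ^ (n * k) :=
        pow_nonneg (mul_nonneg (norm_nonneg z) ht.1.le) _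
      nlinarith [mul_nonneg h2 h4, mul_nonneg h2 h5, norm_nonneg z]
    calc (∫ t in Set.Ioc (0:ℝ) 1, ‖F k t‖)
        ≤ ∫ _ in Set.Ioc (0:ℝ) 1, bc s k * (‖z‖ ^ n) ^ k :=
          MeasureTheory.setIntegral_mono_on ((hFint k).norm)
            (MeasureTheory.integrableOn_const measure_Ioc_lt_top.ne)
            measurableSet_Ioc hle
    _ = bc s k * (‖z‖ ^ n) ^ k := by
        rw [MeasureTheory.setIntegral_const]
        simp [Real.volume_Ioc]
  have hsumint : Summable (fun k => ∫ t in Set.Ioc (0:ℝ) 1, ‖F k t‖) :=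
    Summable.of_nonneg_of_le
      (fun k => MeasureTheory.integral_nonneg (fun t => norm_nonneg _)) hbound
      (summable_bcr hs (pow_nonneg (norm_nonneg z) n) hz1)
  have hHS := MeasureTheory.hasSum_integral_of_summable_integral_norm hFint hsumint
  have hLHS : (∫ t in (0:ℝ)..1,
        z * ((1 : ℂ) - (z * (t : ℂ)) ^ n) ^ (-(((n : ℂ) + 2) / (n : ℂ))))
      = ∫ t in Set.Ioc (0:ℝ) 1, (∑' k, F k t) := by
    rw [show (-(((n : ℂ) + 2) / (n : ℂ))) = -((s:ℝ):ℂ) by rw [hsc],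
      intervalIntegral.integral_of_le zero_le_one]
    refine MeasureTheory.setIntegral_congr_fun measurableSet_Ioc (fun t ht => ?_)
    exact ((hpt t ht).tsum_eq).symm
  have hterm : ∀ k, (∫ t in Set.Ioc (0:ℝ) 1, F k t)
      = (((bc s k : ℝ):ℂ) / ((n * k + 1 : ℕ):ℂ)) * z ^ (n * k + 1) := by
    intro k
    have hnk1r : ((n * k : ℕ):ℝ) + 1 ≠ 0 := by positivity
    rw [← intervalIntegral.integral_of_le zero_le_one]
    have he : ∀ t : ℝ, F k t
        = (z * ((bc s k:ℝ):ℂ) * z ^ (n * k)) * (((t ^ (n * k) : ℝ)):ℂ) := by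
      intro t
      simp only [hF, mul_pow]
      push_cast
      ring
    calc (∫ t in (0:ℝ)..1, F k t)
        = ∫ t in (0:ℝ)..1, (z * ((bc s k:ℝ):ℂ) * z ^ (n * k)) * (((t ^ (n * k) : ℝ)):ℂ) :=
          intervalIntegral.integral_congr (fun t _ => he t)
    _ = (z * ((bc s k:ℝ):ℂ) * z ^ (n * k)) * ∫ t in (0:ℝ)..1, (((t ^ (n * k) : ℝ)):ℂ) :=
          intervalIntegral.integral_const_mul _ _
    _ = (z * ((bc s k:ℝ):ℂ) * z ^ (n * k)) * (((∫ t in (0:ℝ)..1, t ^ (n * k) : ℝ)):ℂ) :=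
          congrArg (fun x => (z * ((bc s k:ℝ):ℂ) * z ^ (n * k)) * x)
            (RCLike.intervalIntegral_ofReal (𝕜 := ℂ) (f := fun t => t ^ (n * k)))
    _ = (((bc s k : ℝ):ℂ) / ((n * k + 1 : ℕ):ℂ)) * z ^ (n * k + 1) := by
          rw [integral_pow]
          push_cast
          field_simp
          ring
  rw [hLHS, ← hHS.tsum_eq]
  refine tsum_congr fun k => ?_
  rw [hterm k]
  have hQ := eval_ascPochhammer_ne_zero n hn k
  have hR := eval_ascPochhammer_ratio n hn k
  have hkf : ((Nat.factorial k : ℕ):ℂ) ≠ 0 := Nat.cast_ne_zero.mpr k.factorial_ne_zero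
  have hnk1 : ((n * k + 1 : ℕ):ℂ) ≠ 0 := Nat.cast_ne_zero.mpr (by omega)
  have hP : ((bc s k:ℝ):ℂ)
      = Polynomial.eval (1 + 2/(n:ℂ)) (ascPochhammer ℂ k) / (Nat.factorial k : ℂ) := by
    have h12 : (1 + 2/(n:ℂ)) = ((s:ℝ):ℂ) := by
      rw [hsc]
      field_simp
    rw [h12, eval_ascPochhammer_cast, bc]
    push_cast
    ring
  rw [hP, ← hR]
  set P := Polynomial.eval (1 + 2/(n:ℂ)) (ascPochhammer ℂ k) with hPdef
  set Q := Polynomial.eval (1/(n:ℂ)) (ascPochhammer ℂ k) with hQdef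
  rw [div_div, mul_assoc, mul_comm P Q, mul_div_mul_left _ _ hQ,
    mul_comm ((Nat.factorial k : ℕ):ℂ) (((n * k + 1 : ℕ)):ℂ)]
end

section
/- Let n ≥ 1 be a natural number and z ∈ ℂ with |z| < 1. Then ∫₀¹ z·(zt)^n·(1 − (zt)^n)^{−(n+2)/n} dt = (1/(n+1)) · ∑_{k=0}^∞ ((1+2/n)_k (1+1/n)_k)/((2+1/n)_k · k!) · z^{nk+n+1}, where (1 − (zt)^n)^{−(n+2)/n} is the principal-branch complex power. In other words, the co-analytic part of the harmonic shear of the polygonal mapping φ(z) = ∫₀^z (1−ζ^n)^{−2/n} dζ with dilatation ω(z) = z^n is g(z) = (z^{n+1}/(n+1))·F(1+2/n, 1+1/n; 2+1/n; z^n). -/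
open Filter Polynomial MeasureTheory Set

noncomputable def psBC (a : ℂ) (k : ℕ) : ℂ :=
  (ascPochhammer ℂ k).eval a / (Nat.factorial k : ℂ)

lemma psBC_zero (a : ℂ) : psBC a 0 = 1 := by
  simp [psBC]

lemma psBC_succ (a : ℂ) (k : ℕ) :
    psBC a (k + 1) * ((k : ℂ) + 1) = psBC a k * (a + k) := by
  have hk : ((Nat.factorial k : ℂ)) ≠ 0 := by
    exact_mod_cast Nat.cast_ne_zero.mpr (Nat.factorial_ne_zero k)
  have hk1 : ((k : ℂ) + 1) ≠ 0 := Nat.cast_add_one_ne_zero k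
  unfold psBC
  rw [ascPochhammer_succ_right]
  simp only [eval_mul, eval_add, eval_X, eval_natCast, Nat.factorial_succ]
  push_cast
  field_simp

lemma psBC_norm_succ (a : ℂ) (k : ℕ) :
    ‖psBC a (k + 1)‖ * ((k : ℝ) + 1) = ‖psBC a k‖ * ‖a + k‖ := by
  have := congrArg norm (psBC_succ a k)
  rw [norm_mul, norm_mul] at this
  have h1 : ‖((k : ℂ) + 1)‖ = (k : ℝ) + 1 := by
    rw [show ((k : ℂ) + 1) = ((k + 1 : ℕ) : ℂ) by push_cast; ring, Complex.norm_natCast]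
    push_cast; ring
  rw [h1] at this
  exact this

lemma psBC_ratio_eventually (a : ℂ) {r r' : ℝ} (hr0 : 0 < r) (hrr' : r < r') :
    ∀ᶠ k : ℕ in atTop, (‖a‖ + (k : ℝ)) * r ≤ r' * (k : ℝ) := by
  filter_upwards [eventually_ge_atTop (⌈‖a‖ * r / (r' - r)⌉₊ + 1)] with k hk
  have h1 : ‖a‖ * r / (r' - r) ≤ (k : ℝ) := by
    refine le_trans (Nat.le_ceil _) ?_
    exact_mod_cast Nat.le_of_lt hk
  have h2 : ‖a‖ * r ≤ (r' - r) * (k : ℝ) := by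
    rw [div_le_iff₀ (by linarith)] at h1; linarith
  nlinarith [Nat.cast_nonneg (α := ℝ) k]

lemma psBC_summable (a : ℂ) {r : ℝ} (hr0 : 0 < r) (hr1 : r < 1) :
    Summable (fun k => ‖psBC a k‖ * r ^ k) := by
  set r' := (r + 1) / 2 with hr'
  have hrr' : r < r' := by rw [hr']; linarith
  have hr'1 : r' < 1 := by rw [hr']; linarith
  apply summable_of_ratio_norm_eventually_le hr'1
  filter_upwards [psBC_ratio_eventually a hr0 hrr'] with k hk
  rw [Real.norm_of_nonneg (by positivity), Real.norm_of_nonneg (by positivity)]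
  have hk1 : (0:ℝ) < (k:ℝ) + 1 := by positivity
  rw [← mul_le_mul_iff_of_pos_right hk1]
  have hb : ‖a + (k : ℂ)‖ ≤ ‖a‖ + (k : ℝ) := by
    simpa using norm_add_le a (k : ℂ)
  have key : ‖a + (k : ℂ)‖ * r ≤ r' * ((k : ℝ) + 1) := by
    refine le_trans (mul_le_mul_of_nonneg_right hb hr0.le) (le_trans hk ?_)
    nlinarith [hr0, hrr']
  calc ‖psBC a (k+1)‖ * r ^ (k+1) * ((k:ℝ)+1)
      = ‖psBC a k‖ * r ^ k * (‖a + (k : ℂ)‖ * r) := by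
        rw [pow_succ]; linear_combination (r ^ k * r) * psBC_norm_succ a k
    _ ≤ ‖psBC a k‖ * r ^ k * (r' * ((k:ℝ)+1)) := by
        exact mul_le_mul_of_nonneg_left key (by positivity)
    _ = r' * (‖psBC a k‖ * r ^ k) * ((k:ℝ)+1) := by ring

lemma psBC_summable_deriv (a : ℂ) {r : ℝ} (hr0 : 0 < r) (hr1 : r < 1) :
    Summable (fun k => ‖psBC a k‖ * ((k : ℝ) * r ^ (k - 1))) := by
  set r' := (r + 1) / 2 with hr'
  have hrr' : r < r' := by rw [hr']; linarith
  have hr'1 : r' < 1 := by rw [hr']; linarith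
  apply summable_of_ratio_norm_eventually_le hr'1
  have h1 : ∀ᶠ k : ℕ in atTop, 1 ≤ k := eventually_ge_atTop 1
  filter_upwards [psBC_ratio_eventually a hr0 hrr', h1] with k hk hk1
  rw [Real.norm_of_nonneg (by positivity), Real.norm_of_nonneg (by positivity)]
  have hb : ‖a + (k : ℂ)‖ ≤ ‖a‖ + (k : ℝ) := by
    simpa using norm_add_le a (k : ℂ)
  have key : ‖a + (k : ℂ)‖ * r ≤ r' * (k : ℝ) :=
    le_trans (mul_le_mul_of_nonneg_right hb hr0.le) hk
  have hpow : r ^ k = r ^ (k - 1) * r := by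
    rw [← pow_succ, Nat.sub_add_cancel hk1]
  have hk1' : (0:ℝ) < (k:ℝ) + 1 := by positivity
  rw [← mul_le_mul_iff_of_pos_right hk1']
  calc ‖psBC a (k+1)‖ * (((k+1 : ℕ):ℝ) * r ^ (k + 1 - 1)) * ((k:ℝ)+1)
      = ‖psBC a k‖ * r ^ (k-1) * (‖a + (k : ℂ)‖ * r) * ((k:ℝ)+1) := by
        simp only [Nat.add_sub_cancel, Nat.cast_add, Nat.cast_one]
        rw [hpow]
        linear_combination (r ^ (k-1) * r * ((k:ℝ)+1)) * psBC_norm_succ a k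
    _ ≤ ‖psBC a k‖ * r ^ (k-1) * (r' * (k : ℝ)) * ((k:ℝ)+1) := by
        have := mul_le_mul_of_nonneg_left key
          (mul_nonneg (norm_nonneg (psBC a k)) (pow_nonneg hr0.le (k-1)))
        exact mul_le_mul_of_nonneg_right this hk1'.le
    _ = r' * (‖psBC a k‖ * ((k:ℝ) * r ^ (k-1))) * ((k:ℝ)+1) := by ring

noncomputable def psF (a : ℂ) (w : ℂ) : ℂ := ∑' k, psBC a k * w ^ k

lemma psF_summable (a : ℂ) {w : ℂ} (hw : ‖w‖ < 1) :
    Summable (fun k => psBC a k * w ^ k) := by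
  set r : ℝ := (‖w‖ + 1) / 2 with hr
  have hr0 : 0 < r := by positivity
  have hr1 : r < 1 := by rw [hr]; linarith
  refine Summable.of_norm_bounded (psBC_summable a hr0 hr1) fun k => ?_
  rw [norm_mul, norm_pow]
  exact mul_le_mul_of_nonneg_left
    (pow_le_pow_left₀ (norm_nonneg w) (by rw [hr]; linarith) k)
    (norm_nonneg _)

lemma psF_hasDerivAt (a : ℂ) {w : ℂ} (hw : ‖w‖ < 1) :
    HasDerivAt (psF a) (∑' k, psBC a k * ((k : ℂ) * w ^ (k - 1))) w := by
  set r : ℝ := (‖w‖ + 1) / 2 with hr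
  have hr0 : 0 < r := by positivity
  have hr1 : r < 1 := by rw [hr]; linarith
  have hwr : ‖w‖ < r := by rw [hr]; linarith
  exact hasDerivAt_tsum_of_isPreconnected (psBC_summable_deriv a hr0 hr1)
    (Metric.isOpen_ball) (convex_ball (0:ℂ) r).isPreconnected
    (fun k y _ => (hasDerivAt_pow k y).const_mul (psBC a k))
    (fun k y hy => by
      rw [norm_mul, norm_mul, norm_pow, Complex.norm_natCast]
      refine mul_le_mul_of_nonneg_left (mul_le_mul_of_nonneg_left ?_ (Nat.cast_nonneg k))
        (norm_nonneg _)
      exact pow_le_pow_left₀ (norm_nonneg y) (le_of_lt (mem_ball_zero_iff.mp hy)) _)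
    (Metric.mem_ball_self hr0)
    (by
      refine Summable.of_norm_bounded (psBC_summable a hr0 hr1) fun k => ?_
      rw [norm_mul, norm_pow, norm_zero]
      rcases Nat.eq_zero_or_pos k with rfl | hk
      · simp
      · rw [zero_pow hk.ne']
        simp [mul_nonneg (norm_nonneg _) (pow_nonneg hr0.le k)])
    (mem_ball_zero_iff.mpr hwr)

lemma psF_deriv_rel (a : ℂ) {w : ℂ} (hw : ‖w‖ < 1) :
    (∑' k, psBC a k * ((k : ℂ) * w ^ (k - 1))) * (1 - w) = a * psF a w := by
  set r : ℝ := (‖w‖ + 1) / 2 with hr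
  have hr0 : 0 < r := by positivity
  have hr1 : r < 1 := by rw [hr]; linarith
  have hwr : ‖w‖ ≤ r := by rw [hr]; linarith
  set D : ℂ := ∑' k, psBC a k * ((k : ℂ) * w ^ (k - 1)) with hD
  have hsumD : Summable (fun k => psBC a k * ((k : ℂ) * w ^ (k - 1))) := by
    refine Summable.of_norm_bounded (psBC_summable_deriv a hr0 hr1) fun k => ?_
    rw [norm_mul, norm_mul, norm_pow, Complex.norm_natCast]
    refine mul_le_mul_of_nonneg_left (mul_le_mul_of_nonneg_left ?_ (Nat.cast_nonneg k))
      (norm_nonneg _)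
    exact pow_le_pow_left₀ (norm_nonneg w) hwr _
  have S1 : HasSum (fun k => psBC a k * ((k : ℂ) * w ^ (k - 1))) D := hsumD.hasSum
  -- shift the sum by one
  have S2 : HasSum (fun k => psBC a (k + 1) * (((k : ℂ) + 1) * w ^ k)) D := by
    have := (hasSum_nat_add_iff' (f := fun k => psBC a k * ((k : ℂ) * w ^ (k - 1))) 1).mpr S1
    simpa using this
  have S2' : HasSum (fun k => psBC a k * (a + k) * w ^ k) D := by
    refine S2.congr_fun fun k => ?_
    calc psBC a k * (a + k) * w ^ k
        = (psBC a (k+1) * ((k : ℂ) + 1)) * w ^ k := by rw [psBC_succ a k]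
      _ = psBC a (k + 1) * (((k : ℂ) + 1) * w ^ k) := by ring
  have S3 : HasSum (fun k => psBC a k * ((k : ℂ) * w ^ k)) (D * w) := by
    have := S1.mul_right w
    refine this.congr_fun fun k => ?_
    rcases Nat.eq_zero_or_pos k with rfl | hk
    · simp
    · have hww : w ^ (k - 1) * w = w ^ k := by
        rw [← pow_succ, Nat.sub_add_cancel hk]
      calc psBC a k * ((k:ℂ) * w ^ k)
          = psBC a k * ((k:ℂ) * (w ^ (k-1) * w)) := by rw [hww]
        _ = psBC a k * ((k:ℂ) * w ^ (k-1)) * w := by ring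
  have S4 : HasSum (fun k => a * (psBC a k * w ^ k)) (D - D * w) := by
    have := S2'.sub S3
    refine this.congr_fun fun k => ?_
    ring
  have S5 : HasSum (fun k => a * (psBC a k * w ^ k)) (a * psF a w) :=
    ((psF_summable a hw).hasSum.mul_left a)
  have := S4.unique S5
  rw [← this]; ring

lemma psF_eq_cpow (a : ℂ) {w : ℂ} (hw : ‖w‖ < 1) :
    psF a w = (1 - w) ^ (-a) := by
  -- slit plane and nonvanishing facts
  have hslit : ∀ v : ℂ, ‖v‖ < 1 → (1 - v) ∈ Complex.slitPlane := by
    intro v hv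
    refine Or.inl ?_
    have : |v.re| ≤ ‖v‖ := Complex.abs_re_le_norm v
    simp only [Complex.sub_re, Complex.one_re]
    have := abs_le.mp this
    linarith
  have hne : ∀ v : ℂ, ‖v‖ < 1 → (1 : ℂ) - v ≠ 0 := by
    intro v hv h
    have : (1 : ℂ) = v := by linear_combination h
    rw [← this] at hv; simp at hv
  -- h has zero derivative on the unit ball
  set h : ℂ → ℂ := fun v => psF a v * (1 - v) ^ a with hh
  have hderiv : ∀ v ∈ Metric.ball (0:ℂ) 1, HasDerivAt h 0 v := by
    intro v hv
    rw [mem_ball_zero_iff] at hv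
    have h1 : HasDerivAt (fun u : ℂ => 1 - u) (-1) v := by
      simpa using (hasDerivAt_id v).const_sub 1
    have h2 : HasDerivAt (fun u : ℂ => (1 - u) ^ a) (a * (1 - v) ^ (a - 1) * (-1)) v :=
      HasDerivAt.cpow_const h1 (hslit v hv)
    have h3 := (psF_hasDerivAt a hv).mul h2
    refine h3.congr_deriv ?_
    have hcp : (1 - v) ^ a = (1 - v) ^ (a - 1) * (1 - v) := by
      rw [Complex.cpow_sub _ _ (hne v hv), Complex.cpow_one]
      rw [div_mul_cancel₀ _ (hne v hv)]
    rw [hcp]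
    have hrel := psF_deriv_rel a hv
    linear_combination ((1 - v) ^ (a - 1)) * hrel
  -- h is constant on the ball
  have hconst : h w = h 0 := by
    have hdiff : DifferentiableOn ℂ h (Metric.ball (0:ℂ) 1) := fun v hv =>
      ((hderiv v hv).differentiableAt).differentiableWithinAt
    refine (convex_ball (0:ℂ) 1).is_const_of_fderivWithin_eq_zero hdiff ?_
      (mem_ball_zero_iff.mpr hw) (by simp)
    intro v hv
    have hopen : Metric.ball (0:ℂ) 1 ∈ nhds v := (Metric.isOpen_ball).mem_nhds hv
    rw [fderivWithin_of_mem_nhds hopen]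
    have := (hderiv v hv).deriv
    have h2 : DifferentiableAt ℂ h v := (hderiv v hv).differentiableAt
    ext u
    simp [← toSpanSingleton_deriv, this]
  have h0 : h 0 = 1 := by
    rw [hh]
    simp only [sub_zero, Complex.one_cpow, mul_one]
    have : psF a 0 = psBC a 0 := by
      rw [psF]
      rw [tsum_eq_single 0 (by intro k hk; simp [zero_pow hk])]
      simp
    rw [this, psBC_zero]
  have hcpne : (1 - w) ^ a ≠ 0 := by
    intro hzero
    rcases (Complex.cpow_eq_zero_iff _ _).mp hzero with ⟨h1, _⟩
    exact hne w hw h1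
  have hone : psF a w * (1 - w) ^ a = 1 := hconst.trans h0
  rw [Complex.cpow_neg]
  exact eq_inv_of_mul_eq_one_right (by linear_combination hone)

lemma psBinomial (a : ℂ) {w : ℂ} (hw : ‖w‖ < 1) :
    HasSum (fun k => psBC a k * w ^ k) ((1 - w) ^ (-a)) := by
  have h1 : HasSum (fun k => psBC a k * w ^ k) (psF a w) := (psF_summable a hw).hasSum
  rwa [psF_eq_cpow a hw] at h1

lemma ascPochhammer_eval_ofReal (x : ℝ) (k : ℕ) :
    (ascPochhammer ℂ k).eval ((x : ℂ)) = (((ascPochhammer ℝ k).eval x : ℝ) : ℂ) := by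
  induction k with
  | zero => simp
  | succ k ih =>
      rw [ascPochhammer_succ_right, ascPochhammer_succ_right, eval_mul, eval_mul, ih]
      push_cast
      simp

lemma ascPochhammer_eval_real_ne_zero {x : ℝ} (hx : 0 < x) (k : ℕ) :
    (ascPochhammer ℂ k).eval ((x : ℂ)) ≠ 0 := by
  rw [ascPochhammer_eval_ofReal]
  exact_mod_cast (ascPochhammer_pos k x hx).ne'

lemma poch_key (b : ℂ) (k : ℕ) :
    b * (ascPochhammer ℂ k).eval (b + 1) = (ascPochhammer ℂ k).eval b * (b + k) := by
  have e1 : (ascPochhammer ℂ (k+1)).eval b = b * (ascPochhammer ℂ k).eval (b+1) := by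
    rw [ascPochhammer_succ_left]
    simp [Polynomial.eval_comp]
  have e2 : (ascPochhammer ℂ (k+1)).eval b = (ascPochhammer ℂ k).eval b * (b + k) := by
    rw [ascPochhammer_succ_right]
    simp
  rw [← e1, e2]


/-- The co-analytic part of the harmonic shear of the regular `n`-gon mapping
`φ(z) = ∫₀^z (1-ζ^n)^(-2/n) dζ` with dilatation `ω(z) = z^n` is
`g(z) = (z^(n+1)/(n+1))·F(1+2/n, 1+1/n; 2+1/n; z^n)`. -/
theorem polygon_shear_coanalytic_part
    (n : ℕ) (hn : 1 ≤ n) (z : ℂ) (hz : ‖z‖ < 1) :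
    (∫ t in (0:ℝ)..1,
        z * (z * (t : ℂ)) ^ n *
          ((1 : ℂ) - (z * (t : ℂ)) ^ n) ^ (-(((n : ℂ) + 2) / (n : ℂ)))) =
      (1 / ((n : ℂ) + 1)) *
        ∑' k : ℕ,
          (Polynomial.eval (1 + 2 / (n : ℂ)) (ascPochhammer ℂ k) *
              Polynomial.eval (1 + 1 / (n : ℂ)) (ascPochhammer ℂ k)) /
            (Polynomial.eval (2 + 1 / (n : ℂ)) (ascPochhammer ℂ k) *
              (Nat.factorial k : ℂ)) * z ^ (n * k + n + 1) := by
  have hn0 : (n : ℂ) ≠ 0 := Nat.cast_ne_zero.mpr (by omega)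
  have hzn : ‖z‖ < 1 := hz
  set a : ℂ := 1 + 2 / (n : ℂ) with ha
  have hexp : -(((n : ℂ) + 2) / (n : ℂ)) = -a := by
    rw [ha]; field_simp
  set q : ℝ := (‖z‖ + 1) / 2 with hq
  have hq0 : 0 < q := by positivity
  have hq1 : q < 1 := by rw [hq]; linarith
  have hzq : ‖z‖ ≤ q := by rw [hq]; linarith
  set ρ : ℝ := q ^ n with hρ
  have hρ0 : 0 < ρ := pow_pos hq0 n
  have hρ1 : ρ < 1 := pow_lt_one₀ hq0.le hq1 (by omega)
  set μ := MeasureTheory.volume.restrict (Set.Ioc (0:ℝ) 1) with hμ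
  set F : ℕ → ℝ → ℂ :=
    fun k t => psBC a k * z ^ (n*k+n+1) * ((t ^ (n*k+n) : ℝ) : ℂ) with hF
  have hFint : ∀ k, MeasureTheory.Integrable (F k) μ := by
    intro k
    rw [hμ]
    exact (continuous_const.mul
      (Complex.continuous_ofReal.comp (continuous_pow (n*k+n)))).integrableOn_Ioc
  have hnormb : ∀ k, ∀ t ∈ Set.Ioc (0:ℝ) 1, ‖F k t‖ ≤ ‖psBC a k‖ * ρ ^ k := by
    intro k t ht
    have ht0 : 0 ≤ t := ht.1.le
    have ht1 : t ≤ 1 := ht.2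
    have hFn : ‖F k t‖ = ‖psBC a k‖ * ‖z‖ ^ (n*k+n+1) * |t| ^ (n*k+n) := by
      rw [hF]
      simp [norm_mul, norm_pow, Complex.norm_real, abs_pow]
    have h1 : ‖z‖ ^ (n*k+n+1) ≤ q ^ (n*k) := by
      calc ‖z‖ ^ (n*k+n+1) ≤ q ^ (n*k+n+1) := pow_le_pow_left₀ (norm_nonneg z) hzq _
        _ ≤ q ^ (n*k) := pow_le_pow_of_le_one hq0.le hq1.le (by omega)
    have h2 : |t| ^ (n*k+n) ≤ 1 := by
      rw [abs_of_nonneg ht0]; exact pow_le_one₀ ht0 ht1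
    have h3 : ‖z‖ ^ (n*k+n+1) * |t| ^ (n*k+n) ≤ q ^ (n*k) * 1 :=
      mul_le_mul h1 h2 (pow_nonneg (abs_nonneg t) _) (pow_nonneg hq0.le _)
    rw [hFn, hρ, ← pow_mul]
    calc ‖psBC a k‖ * ‖z‖ ^ (n*k+n+1) * |t| ^ (n*k+n)
        = ‖psBC a k‖ * (‖z‖ ^ (n*k+n+1) * |t| ^ (n*k+n)) := by ring
      _ ≤ ‖psBC a k‖ * (q ^ (n*k) * 1) := mul_le_mul_of_nonneg_left h3 (norm_nonneg _)
      _ = ‖psBC a k‖ * q ^ (n*k) := by ring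
  have hFsum : Summable (fun k => ∫ t, ‖F k t‖ ∂μ) := by
    refine Summable.of_nonneg_of_le
      (fun k => MeasureTheory.integral_nonneg fun t => norm_nonneg _)
      (fun k => ?_) (psBC_summable a hρ0 hρ1)
    calc (∫ t, ‖F k t‖ ∂μ) ≤ ∫ t, (‖psBC a k‖ * ρ ^ k) ∂μ := by
          rw [hμ]
          refine MeasureTheory.setIntegral_mono_on ?_ ?_ measurableSet_Ioc (hnormb k)
          · exact ((hFint k).norm)
          · refine MeasureTheory.integrableOn_const ?_
            rw [Real.volume_Ioc]
            norm_num
      _ = ‖psBC a k‖ * ρ ^ k := by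
          rw [hμ, MeasureTheory.setIntegral_const]
          rw [Real.volume_real_Ioc_of_le zero_le_one]
          norm_num
  have hhs := MeasureTheory.hasSum_integral_of_summable_integral_norm hFint hFsum
  have hptw : ∀ t ∈ Set.Ioc (0:ℝ) 1,
      z * (z * (t : ℂ)) ^ n * ((1 : ℂ) - (z * (t : ℂ)) ^ n) ^ (-(((n : ℂ) + 2) / (n : ℂ)))
        = ∑' k, F k t := by
    intro t ht
    have ht0 : 0 < t := ht.1
    have ht1 : t ≤ 1 := ht.2
    have hzt : ‖z * (t:ℂ)‖ < 1 := by
      rw [norm_mul, Complex.norm_real, Real.norm_eq_abs, abs_of_nonneg ht0.le]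
      nlinarith [norm_nonneg z]
    have hw : ‖(z * (t:ℂ)) ^ n‖ < 1 := by
      rw [norm_pow]
      exact pow_lt_one₀ (norm_nonneg _) hzt (by omega)
    have hbs := (psBinomial a hw).mul_left (z * (z * (t:ℂ)) ^ n)
    rw [hexp, ← hbs.tsum_eq]
    refine tsum_congr fun k => ?_
    rw [hF]
    push_cast
    ring
  have hL : (∫ t in (0:ℝ)..1,
      z * (z * (t : ℂ)) ^ n * ((1 : ℂ) - (z * (t : ℂ)) ^ n) ^ (-(((n : ℂ) + 2) / (n : ℂ))))
      = ∫ t, (∑' k, F k t) ∂μ := by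
    rw [intervalIntegral.integral_of_le zero_le_one, hμ]
    exact MeasureTheory.setIntegral_congr_fun measurableSet_Ioc fun t ht => hptw t ht
  have hIk : ∀ k, (∫ t, F k t ∂μ)
      = psBC a k * z ^ (n*k+n+1) * (((n*k+n+1 : ℕ) : ℂ))⁻¹ := by
    intro k
    simp only [hF]
    have hoiR : (∫ t, ((t ^ (n*k+n) : ℝ) : ℂ) ∂μ)
        = (((∫ t, t ^ (n*k+n) ∂μ) : ℝ) : ℂ) := integral_ofReal
    rw [MeasureTheory.integral_const_mul, hoiR]
    rw [hμ, ← intervalIntegral.integral_of_le zero_le_one, integral_pow]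
    have : ((n*k+n : ℕ) : ℝ) + 1 = ((n*k+n+1 : ℕ) : ℝ) := by push_cast; ring
    rw [one_pow, zero_pow (by omega), sub_zero, this]
    rw [Complex.ofReal_div, Complex.ofReal_one, Complex.ofReal_natCast]
    rw [one_div]
  -- key Pochhammer identity
  have key : ∀ k : ℕ, ((n:ℂ)+1) * (ascPochhammer ℂ k).eval (2 + 1/(n:ℂ))
      = ((n*k+n+1 : ℕ) : ℂ) * (ascPochhammer ℂ k).eval (1 + 1/(n:ℂ)) := by
    intro k
    have h := poch_key (1 + 1/(n:ℂ)) k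
    have hb1 : (1 : ℂ) + 1/(n:ℂ) + 1 = 2 + 1/(n:ℂ) := by ring
    rw [hb1] at h
    have h1 : ((n:ℂ)+1) = (n:ℂ) * (1 + 1/(n:ℂ)) := by field_simp
    have h2 : ((n*k+n+1 : ℕ) : ℂ) = (n:ℂ) * ((1 + 1/(n:ℂ)) + k) := by
      push_cast
      field_simp
      ring
    rw [h1, h2]
    linear_combination (n:ℂ) * h
  rw [hL, hhs.tsum_eq.symm, ← tsum_mul_left]
  refine tsum_congr fun k => ?_
  rw [hIk k]
  have hC : (ascPochhammer ℂ k).eval (2 + 1/(n:ℂ)) ≠ 0 := by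
    have h := ascPochhammer_eval_real_ne_zero
      (x := 2 + 1/(n:ℝ)) (by positivity) k
    have : ((2 + 1/(n:ℝ) : ℝ) : ℂ) = 2 + 1/(n:ℂ) := by push_cast; ring
    rwa [this] at h
  have hM : ((n*k+n+1 : ℕ) : ℂ) ≠ 0 := Nat.cast_ne_zero.mpr (by omega)
  have hk! : ((Nat.factorial k : ℕ) : ℂ) ≠ 0 :=
    Nat.cast_ne_zero.mpr (Nat.factorial_ne_zero k)
  have hn1 : ((n:ℂ)+1) ≠ 0 := by
    have : ((n:ℂ)+1) = ((n+1 : ℕ) : ℂ) := by push_cast; ring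
    rw [this]
    exact Nat.cast_ne_zero.mpr (by omega)
  have hB : Polynomial.eval (1 + 1/(n:ℂ)) (ascPochhammer ℂ k) ≠ 0 := by
    have h := ascPochhammer_eval_real_ne_zero
      (x := 1 + 1/(n:ℝ)) (by positivity) k
    have hcast : ((1 + 1/(n:ℝ) : ℝ) : ℂ) = 1 + 1/(n:ℂ) := by push_cast; ring
    rwa [hcast] at h
  have e : Polynomial.eval (1 + 1/(n:ℂ)) (ascPochhammer ℂ k) /
      (((n:ℂ)+1) * Polynomial.eval (2 + 1/(n:ℂ)) (ascPochhammer ℂ k))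
      = (((n*k+n+1 : ℕ) : ℂ))⁻¹ := by
    rw [key k, mul_comm]
    exact div_mul_cancel_left₀ hB _
  rw [← e]
  simp only [psBC]
  simp only [div_eq_mul_inv, mul_inv, one_mul]
  ring
end
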